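/- arXiv:2605.15928 — 4 statements merged into one kernel-verified Lean document; each statement's English description precedes it below -/
import Mathlib

section
/- Let ℓ∞(ℂ) be the complex Banach space of bounded complex sequences with the supremum norm, let S ⊆ ℓ∞(ℝ) be a nonempty set of bounded real sequences, and for h > 0 let O_h = {z ∈ ℓ∞(ℂ) : ∃ s ∈ S with |z − s|_∞ < h}. Suppose f : O_h → ℓ∞(ℂ) is holomorphic, maps real sequences in O_h to real sequences, and satisfies sup_{z ∈ O_h} |f(z) − z|_∞ ≤ δ for some δ with 0 < δ ≤ h/4. Then there exists a holomorphic map φ : O_{h/4} → O_h such that: (i) f(φ(z)) = z for every z ∈ O_{h/4}; (ii) |φ(z) − z|_∞ ≤ δ for every z ∈ O_{h/4}; (iii) φ maps real sequences to real sequences; and (iv) for each z ∈ O_{h/4}, φ(z) is the unique point w with |w − z|_∞ ≤ h/4 and f(w) = z. -/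
/-!
STATEMENT 2 (inverse function lemma, Lemma D.1 of Pöschel):
On O_h = {z ∈ ℓ∞(ℂ) : ∃ s ∈ S, |z − s|_∞ < h} (S a set of bounded real sequences),
a holomorphic, reality-preserving map f with sup_{O_h} |f − id|_∞ ≤ δ ≤ h/4 has a
holomorphic, reality-preserving right inverse φ : O_{h/4} → O_h with |φ − id|_∞ ≤ δ,
and φ(z) is the unique preimage of z within distance h/4 of z.
-/

set_option maxHeartbeats 1000000
set_option synthInstance.maxHeartbeats 400000

noncomputable section

/-- The complex Banach space ℓ∞ of bounded complex sequences with the sup norm. -/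
abbrev LinfC := lp (fun _ : ℕ => ℂ) ⊤

/-- `z` is a real sequence. -/
def IsRealSeq (z : LinfC) : Prop := ∀ n : ℕ, (z n).im = 0

/-- The complex neighbourhood of radius `h` of the set `S` of real sequences. -/
def Oset (S : Set LinfC) (h : ℝ) : Set LinfC := {z | ∃ s ∈ S, ‖z - s‖ < h}

open Metric Set Filter Topology NNReal

lemma cauchy_deriv_bound {g : LinfC → LinfC} {s u : LinfC} {h δ : ℝ} (hh : 0 < h)
    (hδ0 : 0 ≤ δ)
    (hg : ∀ w ∈ Metric.ball s h, DifferentiableAt ℂ g w)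
    (hb : ∀ w ∈ Metric.ball s h, ‖g w‖ ≤ δ)
    (hu : ‖u - s‖ < h / 2) : ‖fderiv ℂ g u‖ ≤ 2 * δ / h := by
  refine ContinuousLinearMap.opNorm_le_bound _ (by positivity) fun v => ?_
  rcases eq_or_ne v 0 with rfl | hv
  · simp
  have hv0 : (0:ℝ) < ‖v‖ := norm_pos_iff.mpr hv
  set R : ℝ := h / (2 * ‖v‖) with hR
  have hR0 : 0 < R := by positivity
  have hRv : R * ‖v‖ = h / 2 := by rw [hR, div_mul_eq_mul_div, mul_div_mul_right _ _ hv0.ne']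
  set ψ : ℂ → LinfC := fun t => g (u + t • v) with hψ
  have hmem : ∀ t : ℂ, ‖t‖ ≤ R → u + t • v ∈ Metric.ball s h := by
    intro t ht
    rw [mem_ball_iff_norm]
    have h1 : ‖u + t • v - s‖ ≤ ‖u - s‖ + ‖t • v‖ := by
      have : u + t • v - s = (u - s) + t • v := by abel
      rw [this]; exact norm_add_le _ _
    have h2 : ‖t • v‖ ≤ h / 2 := by
      rw [norm_smul, ← hRv]
      exact mul_le_mul_of_nonneg_right ht hv0.le
    linarith
  have hline : ∀ t₀ : ℂ, HasDerivAt (fun t : ℂ => u + t • v) v t₀ := by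
    intro t₀
    simpa using ((hasDerivAt_id t₀).smul_const v).const_add u
  have hdiff : DifferentiableOn ℂ ψ (Metric.closedBall 0 R) := by
    intro t ht
    rw [Metric.mem_closedBall, dist_zero_right] at ht
    exact ((hg _ (hmem t ht)).comp t (hline t).differentiableAt).differentiableWithinAt
  have hu' : u ∈ Metric.ball s h := by
    rw [mem_ball_iff_norm]; linarith
  have hDer : HasDerivAt ψ (fderiv ℂ g u v) 0 := by
    have h0 : u + (0:ℂ) • v = u := by simp
    have hFD : HasFDerivAt g (fderiv ℂ g u) (u + (0:ℂ) • v) := by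
      rw [h0]; exact (hg u hu').hasFDerivAt
    exact hFD.comp_hasDerivAt 0 (hline 0)
  have hdcc : DiffContOnCl ℂ ψ (Metric.ball 0 R) := by
    refine ⟨hdiff.mono ball_subset_closedBall, ?_⟩
    rw [closure_ball (0:ℂ) hR0.ne']
    exact hdiff.continuousOn
  have hsb : ∀ t ∈ sphere (0:ℂ) R, ‖ψ t‖ ≤ δ := by
    intro t ht
    rw [mem_sphere_zero_iff_norm] at ht
    exact hb _ (hmem t ht.le)
  have key : ‖deriv ψ 0‖ ≤ δ / R :=
    Complex.norm_deriv_le_of_forall_mem_sphere_norm_le hR0 hdcc hsb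
  rw [hDer.deriv] at key
  calc ‖(fderiv ℂ g u) v‖ ≤ δ / R := key
    _ = 2 * δ / h * ‖v‖ := by
        rw [hR]; field_simp

lemma eval_lipschitz (n : ℕ) : LipschitzWith 1 (fun u : LinfC => u n) := by
  refine LipschitzWith.of_dist_le_mul fun x y => ?_
  rw [NNReal.coe_one, one_mul, dist_eq_norm, dist_eq_norm]
  have := lp.norm_apply_le_norm (ENNReal.top_ne_zero) (x - y) n
  simpa [lp.coeFn_sub] using this

theorem inverse_map_lemma
    (S : Set LinfC) (hS : S.Nonempty) (hSreal : ∀ s ∈ S, IsRealSeq s)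
    (h δ : ℝ) (hh : 0 < h) (hδ0 : 0 < δ) (hδ : δ ≤ h / 4)
    (f : LinfC → LinfC)
    (hf_hol : ∀ z ∈ Oset S h, DifferentiableAt ℂ f z)
    (hf_real : ∀ z ∈ Oset S h, IsRealSeq z → IsRealSeq (f z))
    (hf_close : ∀ z ∈ Oset S h, ‖f z - z‖ ≤ δ) :
    ∃ φ : LinfC → LinfC,
      (∀ z ∈ Oset S (h / 4), DifferentiableAt ℂ φ z) ∧
      (∀ z ∈ Oset S (h / 4), φ z ∈ Oset S h) ∧
      -- (i) right inverse
      (∀ z ∈ Oset S (h / 4), f (φ z) = z) ∧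
      -- (ii) closeness to the identity
      (∀ z ∈ Oset S (h / 4), ‖φ z - z‖ ≤ δ) ∧
      -- (iii) reality preservation
      (∀ z ∈ Oset S (h / 4), IsRealSeq z → IsRealSeq (φ z)) ∧
      -- (iv) local uniqueness of the preimage
      (∀ z ∈ Oset S (h / 4), ∀ w : LinfC, ‖w - z‖ ≤ h / 4 → f w = z → w = φ z) := by
  classical
  set g : LinfC → LinfC := fun w => f w - w with hg_def
  have ball_sub : ∀ s ∈ S, ∀ w, ‖w - s‖ < h → w ∈ Oset S h := fun s hs w hw => ⟨s, hs, hw⟩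
  have hgd : ∀ s ∈ S, ∀ w ∈ Metric.ball s h, DifferentiableAt ℂ g w := by
    intro s hs w hw
    rw [mem_ball_iff_norm] at hw
    exact (hf_hol w (ball_sub s hs w hw)).sub differentiableAt_id
  have hgb : ∀ s ∈ S, ∀ w ∈ Metric.ball s h, ‖g w‖ ≤ δ := by
    intro s hs w hw
    rw [mem_ball_iff_norm] at hw
    exact hf_close w (ball_sub s hs w hw)
  have hfd_half : ∀ s ∈ S, ∀ u : LinfC, ‖u - s‖ < h / 2 → ‖fderiv ℂ g u‖ ≤ 1 / 2 := by
    intro s hs u hu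
    refine (cauchy_deriv_bound hh hδ0.le (hgd s hs) (hgb s hs) hu).trans ?_
    rw [div_le_div_iff₀ hh (by norm_num : (0:ℝ) < 2)]
    linarith
  have hlip : ∀ s ∈ S, ∀ w ∈ Metric.ball s (h/2), ∀ w' ∈ Metric.ball s (h/2),
      ‖g w - g w'‖ ≤ 1 / 2 * ‖w - w'‖ := by
    intro s hs w hw w' hw'
    refine Convex.norm_image_sub_le_of_norm_fderiv_le
      (fun x hx => hgd s hs x (Metric.ball_subset_ball (by linarith) hx))
      (fun x hx => hfd_half s hs x (mem_ball_iff_norm.mp hx))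
      (convex_ball s (h/2)) hw' hw
  -- existence of local fixed point
  have main : ∀ z ∈ Oset S (h/4), ∃ w : LinfC,
      ‖w - z‖ ≤ δ ∧ f w = z ∧ (IsRealSeq z → IsRealSeq w) := by
    rintro z ⟨s, hs, hzs⟩
    set T : LinfC → LinfC := fun w => z - g w with hT
    set K : Set LinfC := Metric.closedBall z δ with hK
    have hKball : ∀ w ∈ K, w ∈ Metric.ball s (h/2) := by
      intro w hw
      rw [hK, Metric.mem_closedBall, dist_eq_norm] at hw
      rw [mem_ball_iff_norm]
      have : ‖w - s‖ ≤ ‖w - z‖ + ‖z - s‖ := by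
        have e : w - s = (w - z) + (z - s) := by abel
        rw [e]; exact norm_add_le _ _
      linarith
    have hKOh : ∀ w ∈ K, w ∈ Oset S h := by
      intro w hw
      refine ball_sub s hs w ?_
      have := mem_ball_iff_norm.mp (hKball w hw)
      linarith
    have hmapsto : MapsTo T K K := by
      intro w hw
      rw [hK, Metric.mem_closedBall, dist_eq_norm]
      have : T w - z = -(g w) := by rw [hT]; simp
      rw [this, norm_neg]
      exact hgb s hs w (Metric.ball_subset_ball (by linarith) (hKball w hw))
    have hcontr : ∀ w ∈ K, ∀ w' ∈ K, dist (T w) (T w') ≤ 1/2 * dist w w' := by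
      intro w hw w' hw'
      rw [dist_eq_norm, dist_eq_norm]
      have e : T w - T w' = g w' - g w := by simp only [hT]; abel
      rw [e, norm_sub_rev w w']
      exact hlip s hs w' (hKball w' hw') w (hKball w hw)
    have hsc : IsComplete K := (Metric.isClosed_closedBall).isComplete
    have hcw : ContractingWith (1/2 : ℝ≥0) (hmapsto.restrict T K K) := by
      constructor
      · rw [← NNReal.coe_lt_coe]; norm_num
      · refine LipschitzWith.of_dist_le_mul fun x y => ?_
        have hxy := hcontr x.1 x.2 y.1 y.2
        calc dist ((hmapsto.restrict T K K) x) ((hmapsto.restrict T K K) y)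
            = dist (T x.1) (T y.1) := rfl
          _ ≤ 1/2 * dist x.1 y.1 := hxy
          _ = ((1/2 : ℝ≥0) : ℝ) * dist x y := by
              rw [Subtype.dist_eq]; push_cast; ring
    have hzK : z ∈ K := Metric.mem_closedBall_self hδ0.le
    set w := ContractingWith.efixedPoint' T hsc hmapsto hcw z hzK (edist_ne_top _ _) with hw
    have hwK : w ∈ K := ContractingWith.efixedPoint_mem' hsc hmapsto hcw hzK (edist_ne_top _ _)
    have hfix : T w = w := ContractingWith.efixedPoint_isFixedPt' hsc hmapsto hcw hzK (edist_ne_top _ _)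
    have hfw : f w = z := by
      have h1 : z - (f w - w) = w := hfix
      have h2 : f w - w = z - w := by
        have := congrArg (fun x => x + (f w - w) - w) h1
        simpa using this.symm
      have := congrArg (fun x => x + w) h2
      simpa using this
    have hreal : IsRealSeq z → IsRealSeq w := by
      intro hz
      have hiter : ∀ k : ℕ, T^[k] z ∈ K ∧ IsRealSeq (T^[k] z) := by
        intro k
        induction k with
        | zero => exact ⟨hzK, hz⟩
        | succ k ih =>
          rw [Function.iterate_succ_apply']
          refine ⟨hmapsto ih.1, ?_⟩
          intro n
          have hfr : IsRealSeq (f (T^[k] z)) := hf_real _ (hKOh _ ih.1) ih.2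
          have : (T (T^[k] z)) n = z n - (f (T^[k] z) n - (T^[k] z) n) := by
            rw [hT]
            simp [lp.coeFn_sub, hg_def]
          rw [this]
          simp [Complex.sub_im, hz n, hfr n, ih.2 n]
      have htend : Tendsto (fun k => T^[k] z) atTop (𝓝 w) :=
        ContractingWith.tendsto_iterate_efixedPoint' hsc hmapsto hcw hzK (edist_ne_top _ _)
      intro n
      have hc : Continuous (fun u : LinfC => (u n).im) :=
        Complex.continuous_im.comp (eval_lipschitz n).continuous
      have h1 : Tendsto (fun k => ((T^[k] z : LinfC) n).im) atTop (𝓝 ((w n).im)) :=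
        (hc.tendsto w).comp htend
      have h2 : Tendsto (fun k => ((T^[k] z : LinfC) n).im) atTop (𝓝 0) := by
        refine tendsto_const_nhds.congr fun k => ?_
        exact ((hiter k).2 n).symm
      exact tendsto_nhds_unique h1 h2
    exact ⟨w, by simpa [dist_eq_norm] using (Metric.mem_closedBall.mp hwK), hfw, hreal⟩
  -- uniqueness
  have uniq : ∀ z ∈ Oset S (h/4), ∀ w, ‖w - z‖ ≤ h/4 → f w = z →
      ∀ w', ‖w' - z‖ ≤ h/4 → f w' = z → w = w' := by
    rintro z ⟨s, hs, hzs⟩ w hw hfw w' hw' hfw'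
    have hball : ∀ u : LinfC, ‖u - z‖ ≤ h/4 → u ∈ Metric.ball s (h/2) := by
      intro u hu
      rw [mem_ball_iff_norm]
      have : ‖u - s‖ ≤ ‖u - z‖ + ‖z - s‖ := by
        have e : u - s = (u - z) + (z - s) := by abel
        rw [e]; exact norm_add_le _ _
      linarith
    have e : w - w' = g w' - g w := by
      rw [hg_def]; simp only [hfw, hfw']; abel
    have := hlip s hs w' (hball w' hw') w (hball w hw)
    rw [← e, norm_sub_rev w' w] at this
    have h0 : ‖w - w'‖ = 0 := by
      linarith [norm_nonneg (w - w')]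
    exact sub_eq_zero.mp (norm_eq_zero.mp h0)
  -- definition of φ
  set φ : LinfC → LinfC := fun z => if hz : z ∈ Oset S (h/4) then (main z hz).choose else z
    with hφ
  have hφ_spec : ∀ z (hz : z ∈ Oset S (h/4)),
      ‖φ z - z‖ ≤ δ ∧ f (φ z) = z ∧ (IsRealSeq z → IsRealSeq (φ z)) := by
    intro z hz
    rw [hφ]; simp only [dif_pos hz]
    exact (main z hz).choose_spec
  have hφ_mem : ∀ z ∈ Oset S (h/4), φ z ∈ Oset S h := by
    rintro z hz
    obtain ⟨s, hs, hzs⟩ := hz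
    refine ball_sub s hs _ ?_
    have h1 := (hφ_spec z ⟨s, hs, hzs⟩).1
    have : ‖φ z - s‖ ≤ ‖φ z - z‖ + ‖z - s‖ := by
      have e : φ z - s = (φ z - z) + (z - s) := by abel
      rw [e]; exact norm_add_le _ _
    linarith
  have hopen : IsOpen (Oset S (h/4)) := by
    rw [Metric.isOpen_iff]
    rintro z ⟨s, hs, hzs⟩
    refine ⟨h/4 - ‖z - s‖, by linarith, fun y hy => ?_⟩
    rw [Metric.mem_ball, dist_eq_norm] at hy
    refine ⟨s, hs, ?_⟩
    have : ‖y - s‖ ≤ ‖y - z‖ + ‖z - s‖ := by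
      have e : y - s = (y - z) + (z - s) := by abel
      rw [e]; exact norm_add_le _ _
    linarith
  -- differentiability
  have hdiffφ : ∀ z ∈ Oset S (h/4), DifferentiableAt ℂ φ z := by
    rintro z hz
    obtain ⟨s, hs, hzs⟩ := hz
    have hz' : z ∈ Oset S (h/4) := ⟨s, hs, hzs⟩
    set ε : ℝ := h/4 - ‖z - s‖ with hε
    have hε0 : 0 < ε := by rw [hε]; linarith
    have hmem14 : ∀ y ∈ Metric.ball z ε, y ∈ Oset S (h/4) := by
      intro y hy
      rw [Metric.mem_ball, dist_eq_norm] at hy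
      refine ⟨s, hs, ?_⟩
      have : ‖y - s‖ ≤ ‖y - z‖ + ‖z - s‖ := by
        have e : y - s = (y - z) + (z - s) := by abel
        rw [e]; exact norm_add_le _ _
      rw [hε] at hy; linarith
    have hφball : ∀ y ∈ Metric.ball z ε, φ y ∈ Metric.ball s (h/2) := by
      intro y hy
      have hy4 : ‖y - s‖ < h/4 := by
        rw [Metric.mem_ball, dist_eq_norm] at hy
        have : ‖y - s‖ ≤ ‖y - z‖ + ‖z - s‖ := by
          have e : y - s = (y - z) + (z - s) := by abel
          rw [e]; exact norm_add_le _ _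
        rw [hε] at hy; linarith
      have h1 := (hφ_spec y (hmem14 y hy)).1
      rw [mem_ball_iff_norm]
      have : ‖φ y - s‖ ≤ ‖φ y - y‖ + ‖y - s‖ := by
        have e : φ y - s = (φ y - y) + (y - s) := by abel
        rw [e]; exact norm_add_le _ _
      linarith
    -- φ is 2-Lipschitz on ball z ε
    have hφlip : ∀ y ∈ Metric.ball z ε, ∀ y' ∈ Metric.ball z ε,
        ‖φ y - φ y'‖ ≤ 2 * ‖y - y'‖ := by
      intro y hy y' hy'
      have e1 : φ y = y - g (φ y) := by
        rw [hg_def]; simp [(hφ_spec y (hmem14 y hy)).2.1]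
      have e2 : φ y' = y' - g (φ y') := by
        rw [hg_def]; simp [(hφ_spec y' (hmem14 y' hy')).2.1]
      have e : φ y - φ y' = (y - y') + (g (φ y') - g (φ y)) := by
        conv_lhs => rw [e1, e2]
        abel
      have h1 : ‖φ y - φ y'‖ ≤ ‖y - y'‖ + ‖g (φ y') - g (φ y)‖ := by
        rw [e]; exact norm_add_le _ _
      have h2 := hlip s hs (φ y') (hφball y' hy') (φ y) (hφball y hy)
      have h3 : ‖φ y' - φ y‖ = ‖φ y - φ y'‖ := norm_sub_rev _ _
      rw [h3] at h2
      linarith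
    have hcont : ContinuousAt φ z := by
      rw [Metric.continuousAt_iff]
      intro ε' hε'
      refine ⟨min ε (ε'/2), by positivity, fun {y} hy => ?_⟩
      rw [dist_eq_norm] at hy ⊢
      have hyb : y ∈ Metric.ball z ε := by
        rw [Metric.mem_ball, dist_eq_norm]
        exact lt_of_lt_of_le hy (min_le_left _ _)
      have := hφlip y hyb z (Metric.mem_ball_self hε0)
      have hy2 : ‖y - z‖ < ε'/2 := lt_of_lt_of_le hy (min_le_right _ _)
      calc ‖φ y - φ z‖ ≤ 2 * ‖y - z‖ := this
        _ < ε' := by linarith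
    -- derivative of f at φ z is invertible
    have hφzb : φ z ∈ Metric.ball s (h/2) := hφball z (Metric.mem_ball_self hε0)
    have hφzOh : φ z ∈ Oset S h := hφ_mem z hz'
    have hgdz : DifferentiableAt ℂ g (φ z) := (hf_hol _ hφzOh).sub differentiableAt_id
    set B : LinfC →L[ℂ] LinfC := fderiv ℂ g (φ z) with hB
    have hBnorm : ‖B‖ ≤ 1/2 := hfd_half s hs (φ z) (mem_ball_iff_norm.mp hφzb)
    have hBlt : ‖-B‖ < 1 := by rw [norm_neg]; linarith
    obtain ⟨e, hecoe⟩ : ∃ e : LinfC ≃L[ℂ] LinfC,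
        (e : LinfC →L[ℂ] LinfC) = ContinuousLinearMap.id ℂ LinfC + B := by
      refine ⟨ContinuousLinearEquiv.ofUnit (Units.oneSub (-B) hBlt), ?_⟩
      have h1 : (ContinuousLinearEquiv.ofUnit (Units.oneSub (-B) hBlt) : LinfC →L[ℂ] LinfC)
          = (Units.oneSub (-B) hBlt).val := rfl
      rw [h1, Units.val_oneSub, sub_neg_eq_add, ContinuousLinearMap.one_def]
    have hfA : HasFDerivAt f (e : LinfC →L[ℂ] LinfC) (φ z) := by
      rw [hecoe]
      have h1 : HasFDerivAt g B (φ z) := hgdz.hasFDerivAt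
      have h2 : HasFDerivAt (fun w : LinfC => w + g w)
          (ContinuousLinearMap.id ℂ LinfC + B) (φ z) := (hasFDerivAt_id (φ z)).add h1
      have : (fun w : LinfC => w + g w) = f := by
        funext w; rw [hg_def]; simp
      rwa [this] at h2
    have hev : ∀ᶠ y in 𝓝 z, f (φ y) = y := by
      filter_upwards [hopen.mem_nhds hz'] with y hy
      exact (hφ_spec y hy).2.1
    have hkey : HasFDerivAt φ ((e.symm : LinfC →L[ℂ] LinfC)) z :=
      HasFDerivAt.of_local_left_inverse hcont hfA hev
    exact hkey.differentiableAt
  refine ⟨φ, hdiffφ, hφ_mem, fun z hz => (hφ_spec z hz).2.1, fun z hz => (hφ_spec z hz).1,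
    fun z hz => (hφ_spec z hz).2.2, ?_⟩
  intro z hz w hw hfw
  have h1 := (hφ_spec z hz).1
  exact uniq z hz w hw hfw (φ z) (by linarith) (hφ_spec z hz).2.1
end
end

section
/- Let β ∈ (0,1), 0 < μ < β, ρ > 0, σ > 0, 0 < ρ′ ≤ ρ, 0 < σ′ ≤ σ, L ≥ 1, and let 𝔸 be a collection of finite subsets of ℕ. Let P be a formal Hamiltonian with ‖P‖_{β,ρ,σ} < ∞. Define its truncation Q by Q^{[l]}_α = P^{[l]}_α whenever A(l,α)\{max A(l,α)} ∈ 𝔸, |l|₁ ≤ L and |α|₁ ≤ 1, and Q^{[l]}_α = 0 otherwise, and set R = P − Q. Then ‖R‖_{β−μ,ρ′,σ′} ≤ ( sup{ (m_A)^{μ} : A ⊆ ℕ finite, A ∉ 𝔸 } + (ρ′/ρ)² + e^{−L(σ−σ′)} ) · ‖P‖_{β,ρ,σ}, where the supremum is interpreted as 0 if 𝔸 contains every finite subset of ℕ. -/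
/-!
Common setting: mass sequences, formal Hamiltonians `h = (h^{[l]}_α)` indexed by
finitely supported `l : ℕ → ℤ`, `α : ℕ → ℕ`, the weighted norms `‖·‖_{β,ρ,σ}`, and
the (formal) Poisson bracket relative to the symplectic form `Σ_q m_q dJ_q ∧ dφ_q`.
-/

open scoped ENNReal NNReal BigOperators Classical

noncomputable section

/-- A mass sequence: non-increasing, with values in (0,1], and `m i ≤ M e^{-κ i}`. -/
structure IsMassSeq (κ M : ℝ) (m : ℕ → ℝ) : Prop where
  pos : ∀ i, 0 < m i
  le_one : ∀ i, m i ≤ 1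
  anti : Antitone m
  decay : ∀ i : ℕ, m i ≤ M * Real.exp (-κ * i)

/-- `m_A = ∏_{j∈A} m_j`. -/
def mProd (m : ℕ → ℝ) (A : Finset ℕ) : ℝ := ∏ i ∈ A, m i

/-- A formal Hamiltonian: the family of coefficients `h^{[l]}_α ∈ ℂ`.
(The coefficient at `(0,0)` is irrelevant: it is ignored by the norm.) -/
abbrev FormalHam := (ℕ →₀ ℤ) → (ℕ →₀ ℕ) → ℂ

/-- `A(l,α) = {j : l_j ≠ 0 or α_j ≠ 0}`. -/
def hSupp (l : ℕ →₀ ℤ) (α : ℕ →₀ ℕ) : Finset ℕ := l.support ∪ α.support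

/-- `|l|₁ = Σ_j |l_j|`. -/
def l1 (l : ℕ →₀ ℤ) : ℕ := l.sum fun _ v => v.natAbs

/-- `|α|₁ = Σ_j α_j`. -/
def a1 (α : ℕ →₀ ℕ) : ℕ := α.sum fun _ v => v

/-- Contribution of the monomial indexed by `p = (l,α)` to the `j`-th block of the norm:
`(m_{A(l,α)\{j}})^{-β} |h^{[l]}_α| ρ^{|α|₁} e^{σ|l|₁}` if `max A(l,α) = j`, else `0`. -/
def hamTerm (m : ℕ → ℝ) (β ρ σ : ℝ) (h : FormalHam) (j : ℕ)
    (p : (ℕ →₀ ℤ) × (ℕ →₀ ℕ)) : ℝ≥0∞ :=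
  if (hSupp p.1 p.2).max = (j : WithBot ℕ) then
    ENNReal.ofReal (mProd m ((hSupp p.1 p.2).erase j) ^ (-β) *
      ‖h p.1 p.2‖ * ρ ^ a1 p.2 * Real.exp (σ * (l1 p.1 : ℝ)))
  else 0

/-- The norm `‖h‖_{β,ρ,σ} = sup_j m_j^{-1} Σ_{max A(l,α) = j} (m_{A\{j}})^{-β} |h^{[l]}_α|
ρ^{|α|₁} e^{σ|l|₁}`, valued in `[0,∞]`. -/
def hamNorm (m : ℕ → ℝ) (β ρ σ : ℝ) (h : FormalHam) : ℝ≥0∞ :=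
  ⨆ j : ℕ, (ENNReal.ofReal (m j))⁻¹ *
    ∑' p : (ℕ →₀ ℤ) × (ℕ →₀ ℕ), hamTerm m β ρ σ h j p

/-- The family whose sum (over `x = (q, l', α')`) gives the `(l,α)`-coefficient of the
Poisson bracket `{h,g}` (up to the factor `i`):
`m_q^{-1} (l'_q α''_q − α'_q l''_q) h^{[l']}_{α'} g^{[l'']}_{α''}` where
`l'' = l − l'` and `α'' = α + 𝟙_q − α'` (the term being `0` unless `α' ≤ α + 𝟙_q`). -/
def bracketTerm (m : ℕ → ℝ) (h g : FormalHam) (l : ℕ →₀ ℤ) (α : ℕ →₀ ℕ)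
    (x : ℕ × (ℕ →₀ ℤ) × (ℕ →₀ ℕ)) : ℂ :=
  if x.2.2 ≤ α + Finsupp.single x.1 1 then
    ((m x.1 : ℂ))⁻¹ *
      ((x.2.1 x.1 : ℂ) * (((α + Finsupp.single x.1 1 - x.2.2 : ℕ →₀ ℕ) x.1 : ℕ) : ℂ) -
        ((x.2.2 x.1 : ℕ) : ℂ) * (((l - x.2.1 : ℕ →₀ ℤ) x.1 : ℤ) : ℂ)) *
      h x.2.1 x.2.2 * g (l - x.2.1) (α + Finsupp.single x.1 1 - x.2.2)
  else 0

/-- The Poisson bracket `{h,g}` of two formal Hamiltonians: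
`{h,g}^{[l]}_α = i Σ_{q} m_q^{-1} Σ_{l'+l''=l} Σ_{α'+α''=α+𝟙_q}
(l'_q α''_q − α'_q l''_q) h^{[l']}_{α'} g^{[l'']}_{α''}`. -/
def bracket (m : ℕ → ℝ) (h g : FormalHam) : FormalHam :=
  fun l α => Complex.I * ∑' x : ℕ × (ℕ →₀ ℤ) × (ℕ →₀ ℕ), bracketTerm m h g l α x

/-- `S_β = sup_q Σ_{n≥0} (m_{q+n}/m_q)^{1-β}`, valued in `[0,∞]`. -/
def Sbeta (m : ℕ → ℝ) (β : ℝ) : ℝ≥0∞ :=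
  ⨆ q : ℕ, ∑' n : ℕ, ENNReal.ofReal ((m (q + n) / m q) ^ (1 - β))

/-- `A̲ = A \ {max A}`. -/
def under (A : Finset ℕ) : Finset ℕ := A.filter fun j => ∃ i ∈ A, j < i

/-!
STATEMENT 4 (truncation estimate): if `Q` keeps exactly the coefficients of `P` with
`A(l,α)\{max} ∈ 𝔸`, `|l|₁ ≤ L`, `|α|₁ ≤ 1`, and `R = P − Q`, then
`‖R‖_{β−μ,ρ′,σ′} ≤ (sup_{A ∉ 𝔸} (m_A)^μ + (ρ′/ρ)² + e^{−L(σ−σ′)}) ‖P‖_{β,ρ,σ}`.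
-/

private lemma prod4_le {a x b c a' b' c' k1 k2 k3 K : ℝ}
    (h1 : a ≤ k1 * a') (h2 : b ≤ k2 * b') (h3 : c ≤ k3 * c')
    (hx : 0 ≤ x) (hb : 0 ≤ b) (hc : 0 ≤ c)
    (ha' : 0 ≤ a') (hb' : 0 ≤ b') (hc' : 0 ≤ c')
    (hk1 : 0 ≤ k1) (hk2 : 0 ≤ k2) (hk3 : 0 ≤ k3)
    (hK : k1 * k2 * k3 ≤ K) :
    a * x * b * c ≤ K * (a' * x * b' * c') := by
  have hA' : 0 ≤ k1 * a' := mul_nonneg hk1 ha'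
  have hB' : 0 ≤ k2 * b' := mul_nonneg hk2 hb'
  have hstep : a * x * b * c ≤ (k1 * a') * x * (k2 * b') * (k3 * c') := by
    refine mul_le_mul (mul_le_mul (mul_le_mul h1 le_rfl hx hA') h2 hb
      (mul_nonneg hA' hx)) h3 hc ?_
    exact mul_nonneg (mul_nonneg hA' hx) hB'
  calc a * x * b * c ≤ (k1 * a') * x * (k2 * b') * (k3 * c') := hstep
    _ = (k1 * k2 * k3) * (a' * x * b' * c') := by ring
    _ ≤ K * (a' * x * b' * c') := by
        refine mul_le_mul_of_nonneg_right hK ?_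
        exact mul_nonneg (mul_nonneg (mul_nonneg ha' hx) hb') hc'

set_option maxHeartbeats 1000000 in
theorem truncation_estimate
    (κ M : ℝ) (hκ : 0 < κ) (hM : 1 ≤ M) (m : ℕ → ℝ) (hm : IsMassSeq κ M m)
    (β μ ρ σ ρ' σ' L : ℝ)
    (hβ : β ∈ Set.Ioo (0 : ℝ) 1) (hμ0 : 0 < μ) (hμβ : μ < β)
    (hρ : 0 < ρ) (hσ : 0 < σ) (hρ'0 : 0 < ρ') (hρ' : ρ' ≤ ρ)
    (hσ'0 : 0 < σ') (hσ' : σ' ≤ σ) (hL : 1 ≤ L)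
    (𝔸 : Set (Finset ℕ))
    (P : FormalHam) (hP : hamNorm m β ρ σ P ≠ ⊤)
    (Q R : FormalHam)
    (hQ : ∀ l α, Q l α =
      if under (hSupp l α) ∈ 𝔸 ∧ ((l1 l : ℕ) : ℝ) ≤ L ∧ a1 α ≤ 1 then P l α else 0)
    (hR : ∀ l α, R l α = P l α - Q l α) :
    hamNorm m (β - μ) ρ' σ' R ≤
      ENNReal.ofReal
        (sSup ((fun A : Finset ℕ => mProd m A ^ μ) '' {A | A ∉ 𝔸}) +
          (ρ' / ρ) ^ 2 + Real.exp (-L * (σ - σ'))) *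
        hamNorm m β ρ σ P := by
  obtain ⟨hβ0, hβ1⟩ := hβ
  set S := sSup ((fun A : Finset ℕ => mProd m A ^ μ) '' {A | A ∉ 𝔸}) with hSdef
  set C := S + (ρ' / ρ) ^ 2 + Real.exp (-L * (σ - σ')) with hCdef
  have hmpos : ∀ B : Finset ℕ, 0 < mProd m B := fun B => Finset.prod_pos fun i _ => hm.pos i
  have hmle1 : ∀ B : Finset ℕ, mProd m B ≤ 1 := fun B =>
    Finset.prod_le_one (fun i _ => (hm.pos i).le) fun i _ => hm.le_one i
  have hbdd : BddAbove ((fun A : Finset ℕ => mProd m A ^ μ) '' {A | A ∉ 𝔸}) := by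
    refine ⟨1, ?_⟩
    rintro x ⟨B, -, rfl⟩
    exact Real.rpow_le_one (hmpos B).le (hmle1 B) hμ0.le
  have hS0 : 0 ≤ S := Real.sSup_nonneg
    (by rintro x ⟨B, -, rfl⟩; exact (Real.rpow_pos_of_pos (hmpos B) μ).le)
  have hC0 : 0 ≤ C :=
    add_nonneg (add_nonneg hS0 (sq_nonneg _)) (Real.exp_pos _).le
  have hunder : ∀ (A : Finset ℕ) (j : ℕ), A.max = (j : WithBot ℕ) → under A = A.erase j := by
    intro A j hA
    have hjA : j ∈ A := Finset.mem_of_max hA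
    ext x
    simp only [under, Finset.mem_filter, Finset.mem_erase]
    constructor
    · rintro ⟨hx, i, hi, hxi⟩
      have hij : (i : WithBot ℕ) ≤ (j : WithBot ℕ) := hA ▸ Finset.le_max hi
      have hij' : i ≤ j := WithBot.coe_le_coe.1 hij
      exact ⟨by omega, hx⟩
    · rintro ⟨hxj, hx⟩
      have hxx : (x : WithBot ℕ) ≤ (j : WithBot ℕ) := hA ▸ Finset.le_max hx
      exact ⟨hx, j, hjA, lt_of_le_of_ne (WithBot.coe_le_coe.1 hxx) hxj⟩
  -- real key inequality
  have rkey : ∀ (j : ℕ) (l : ℕ →₀ ℤ) (α : ℕ →₀ ℕ), (hSupp l α).max = (j : WithBot ℕ) →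
      mProd m ((hSupp l α).erase j) ^ (-(β - μ)) * ‖R l α‖ * ρ' ^ a1 α *
        Real.exp (σ' * (l1 l : ℝ)) ≤
      C * (mProd m ((hSupp l α).erase j) ^ (-β) * ‖P l α‖ * ρ ^ a1 α *
        Real.exp (σ * (l1 l : ℝ))) := by
    intro j l α hmax
    set m' := mProd m ((hSupp l α).erase j) with hm'def
    have hm'pos : 0 < m' := hmpos _
    have hm'le : m' ≤ 1 := hmle1 _
    have hG1 : (0:ℝ) ≤ m' ^ (-β) := (Real.rpow_pos_of_pos hm'pos _).le
    have hF1n : (0:ℝ) ≤ m' ^ (-(β - μ)) := (Real.rpow_pos_of_pos hm'pos _).le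
    have hX : (0:ℝ) ≤ ‖P l α‖ := norm_nonneg _
    have hG2 : (0:ℝ) ≤ ρ ^ a1 α := pow_nonneg hρ.le _
    have hF2n : (0:ℝ) ≤ ρ' ^ a1 α := pow_nonneg hρ'0.le _
    have hG3 : (0:ℝ) ≤ Real.exp (σ * (l1 l : ℝ)) := (Real.exp_pos _).le
    have hF3n : (0:ℝ) ≤ Real.exp (σ' * (l1 l : ℝ)) := (Real.exp_pos _).le
    have hTP : (0:ℝ) ≤ m' ^ (-β) * ‖P l α‖ * ρ ^ a1 α *
        Real.exp (σ * (l1 l : ℝ)) :=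
      mul_nonneg (mul_nonneg (mul_nonneg hG1 hX) hG2) hG3
    by_cases hcond : under (hSupp l α) ∈ 𝔸 ∧ ((l1 l : ℕ) : ℝ) ≤ L ∧ a1 α ≤ 1
    · have hR0 : R l α = 0 := by rw [hR, hQ, if_pos hcond, sub_self]
      rw [hR0]
      simp only [map_zero, norm_zero, mul_zero, zero_mul]
      exact mul_nonneg hC0 hTP
    · have hRP : R l α = P l α := by rw [hR, hQ, if_neg hcond, sub_zero]
      rw [hRP]
      -- common bounds
      have hF1 : m' ^ (-(β - μ)) ≤ m' ^ (-β) :=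
        Real.rpow_le_rpow_of_exponent_ge hm'pos hm'le (by linarith)
      have hF2 : ρ' ^ a1 α ≤ ρ ^ a1 α := pow_le_pow_left₀ hρ'0.le hρ' _
      have hF3 : Real.exp (σ' * (l1 l : ℝ)) ≤ Real.exp (σ * (l1 l : ℝ)) := by
        apply Real.exp_le_exp.2
        exact mul_le_mul_of_nonneg_right hσ' (Nat.cast_nonneg _)
      rw [not_and_or, not_and_or] at hcond
      rcases hcond with h1 | h2 | h3
      · -- under ∉ 𝔸
        have hmem : m' ^ μ ∈ ((fun A : Finset ℕ => mProd m A ^ μ) '' {A | A ∉ 𝔸}) := by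
          refine ⟨(hSupp l α).erase j, ?_, rfl⟩
          rwa [Set.mem_setOf_eq, ← hunder _ _ hmax]
        have hsup : m' ^ μ ≤ S := le_csSup hbdd hmem
        have hsplit : m' ^ (-(β - μ)) = m' ^ μ * m' ^ (-β) := by
          rw [← Real.rpow_add hm'pos]; congr 1; ring
        refine prod4_le ?_ (by rw [one_mul]; exact hF2) (by rw [one_mul]; exact hF3)
          hX hF2n hF3n hG1 hG2 hG3 hS0 zero_le_one zero_le_one ?_
        · rw [hsplit]
          exact mul_le_mul_of_nonneg_right hsup hG1
        · rw [hCdef]; nlinarith [sq_nonneg (ρ' / ρ), (Real.exp_pos (-L * (σ - σ'))).le]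
      · -- L < l1
        push_neg at h2
        have hF3' : Real.exp (σ' * (l1 l : ℝ)) ≤
            Real.exp (-L * (σ - σ')) * Real.exp (σ * (l1 l : ℝ)) := by
          rw [← Real.exp_add]
          apply Real.exp_le_exp.2
          nlinarith [mul_nonneg (sub_nonneg.2 hσ') (sub_nonneg.2 h2.le)]
        refine prod4_le (by rw [one_mul]; exact hF1) (by rw [one_mul]; exact hF2) hF3'
          hX hF2n hF3n hG1 hG2 hG3 zero_le_one zero_le_one (Real.exp_pos _).le ?_
        rw [hCdef]; nlinarith [sq_nonneg (ρ' / ρ), hS0]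
      · -- 2 ≤ a1 α
        push_neg at h3
        have ha2 : 2 ≤ a1 α := h3
        have hρρ : ρ' / ρ ≤ 1 := (div_le_one hρ).2 hρ'
        have hρρ0 : (0:ℝ) ≤ ρ' / ρ := div_nonneg hρ'0.le hρ.le
        have hF2' : ρ' ^ a1 α ≤ (ρ' / ρ) ^ 2 * ρ ^ a1 α := by
          have heq : ρ' ^ a1 α = (ρ' / ρ) ^ a1 α * ρ ^ a1 α := by
            rw [← mul_pow, div_mul_cancel₀ _ hρ.ne']
          rw [heq]
          exact mul_le_mul_of_nonneg_right (pow_le_pow_of_le_one hρρ0 hρρ ha2) hG2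
        refine prod4_le (by rw [one_mul]; exact hF1) hF2' (by rw [one_mul]; exact hF3)
          hX hF2n hF3n hG1 hG2 hG3 zero_le_one (sq_nonneg _) zero_le_one ?_
        rw [hCdef]; nlinarith [hS0, (Real.exp_pos (-L * (σ - σ'))).le]
  -- pointwise ENNReal bound
  have key : ∀ (j : ℕ) (p : (ℕ →₀ ℤ) × (ℕ →₀ ℕ)),
      hamTerm m (β - μ) ρ' σ' R j p ≤ ENNReal.ofReal C * hamTerm m β ρ σ P j p := by
    intro j p
    unfold hamTerm
    split_ifs with hmax
    · rw [← ENNReal.ofReal_mul hC0]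
      exact ENNReal.ofReal_le_ofReal (rkey j p.1 p.2 hmax)
    · simp
  refine iSup_le fun j => ?_
  have hsum : ∑' p : (ℕ →₀ ℤ) × (ℕ →₀ ℕ), hamTerm m (β - μ) ρ' σ' R j p ≤
      ENNReal.ofReal C * ∑' p : (ℕ →₀ ℤ) × (ℕ →₀ ℕ), hamTerm m β ρ σ P j p := by
    rw [← ENNReal.tsum_mul_left]
    exact ENNReal.tsum_le_tsum (key j)
  calc (ENNReal.ofReal (m j))⁻¹ * ∑' p : (ℕ →₀ ℤ) × (ℕ →₀ ℕ), hamTerm m (β - μ) ρ' σ' R j p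
      ≤ (ENNReal.ofReal (m j))⁻¹ *
        (ENNReal.ofReal C * ∑' p : (ℕ →₀ ℤ) × (ℕ →₀ ℕ), hamTerm m β ρ σ P j p) :=
        mul_le_mul_right hsum _
    _ = ENNReal.ofReal C *
        ((ENNReal.ofReal (m j))⁻¹ * ∑' p : (ℕ →₀ ℤ) × (ℕ →₀ ℕ), hamTerm m β ρ σ P j p) := by
        ring
    _ ≤ ENNReal.ofReal C * hamNorm m β ρ σ P :=
        mul_le_mul_right (le_iSup (fun j => (ENNReal.ofReal (m j))⁻¹ *
          ∑' p : (ℕ →₀ ℤ) × (ℕ →₀ ℕ), hamTerm m β ρ σ P j p) j) _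
end
end

section
/- Let ξ ∈ ℓ∞(ℕ,ℝ), γ > 0, and let Q be a formal Hamiltonian with ‖Q‖_{β,ρ,σ} < ∞ whose coefficients vanish unless |α|₁ ≤ 1, and such that |Σ_j l_j ξ_j| ≥ γ for every l ≠ 0 for which some coefficient Q^{[l]}_α is nonzero. Let N be the formal Hamiltonian of ξ·J, i.e. N^{[0]}_{𝟙_j} = m_j ξ_j for each j and all other coefficients zero, and let ⟨Q⟩ be the formal Hamiltonian with ⟨Q⟩^{[0]}_α = Q^{[0]}_α and ⟨Q⟩^{[l]}_α = 0 for l ≠ 0. Define G by G^{[l]}_α = −i (Σ_j l_j ξ_j)^{−1} Q^{[l]}_α for l ≠ 0 and G^{[l]}_α = 0 for l = 0. Then the Poisson bracket {N,G} is well defined (each coefficient given by an absolutely summable family), the cohomological equation {N,G} + Q = ⟨Q⟩ holds coefficientwise, and ‖G‖_{β,ρ,σ} ≤ γ^{−1} ‖Q‖_{β,ρ,σ}. -/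
/-!
Common setting: mass sequences, formal Hamiltonians `h = (h^{[l]}_α)` indexed by
finitely supported `l : ℕ → ℤ`, `α : ℕ → ℕ`, the weighted norms `‖·‖_{β,ρ,σ}`, and
the (formal) Poisson bracket relative to the symplectic form `Σ_q m_q dJ_q ∧ dφ_q`.
-/

open scoped ENNReal NNReal BigOperators Classical

noncomputable section

/-- The formal Hamiltonian of `N = ξ·J` (mass scalar product): `N^{[0]}_{𝟙_j} = m_j ξ_j`
and all other coefficients vanish. -/
def linearHam (m ξ : ℕ → ℝ) : FormalHam := fun l α =>
  if l = 0 then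
    ∑ j ∈ α.support, (if α = Finsupp.single j 1 then ((m j : ℂ) * (ξ j : ℂ)) else 0)
  else 0

/-- The angular average `⟨Q⟩`: keep only the coefficients with `l = 0`. -/
def avgHam (Q : FormalHam) : FormalHam := fun l α => if l = 0 then Q l α else 0

/-- The solution `G` of the cohomological equation:
`G^{[l]}_α = −i (Σ_j l_j ξ_j)^{-1} Q^{[l]}_α` for `l ≠ 0`, and `G^{[0]}_α = 0`. -/
def cohomSol (ξ : ℕ → ℝ) (Q : FormalHam) : FormalHam := fun l α =>
  if l = 0 then 0
  else (-Complex.I) * (((∑ j ∈ l.support, (l j : ℝ) * ξ j : ℝ) : ℂ))⁻¹ * Q l α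

/-!
STATEMENT 5 (cohomological equation): with `N = ξ·J`, `Q` affine in the actions whose
nonzero Fourier modes are `γ`-nonresonant, and `G` as above, the bracket `{N,G}` is
well defined, `{N,G} + Q = ⟨Q⟩` coefficientwise, and `‖G‖_{β,ρ,σ} ≤ γ^{-1} ‖Q‖_{β,ρ,σ}`.
-/

lemma linearHam_single (m ξ : ℕ → ℝ) (j : ℕ) :
    linearHam m ξ 0 (Finsupp.single j 1) = (m j : ℂ) * (ξ j : ℂ) := by
  simp [linearHam, Finsupp.support_single_ne_zero j one_ne_zero]

lemma bt_eq (m : ℕ → ℝ) (hm : ∀ i, m i ≠ 0) (ξ : ℕ → ℝ) (G : FormalHam)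
    (l : ℕ →₀ ℤ) (α : ℕ →₀ ℕ) (x : ℕ × (ℕ →₀ ℤ) × (ℕ →₀ ℕ)) :
    bracketTerm m (linearHam m ξ) G l α x =
      if x.2.1 = 0 ∧ x.2.2 = Finsupp.single x.1 1 then
        -((l x.1 : ℂ) * (ξ x.1 : ℂ)) * G l α else 0 := by
  obtain ⟨q, l', α'⟩ := x
  by_cases hl' : l' = 0
  · subst hl'
    by_cases hα' : α' = Finsupp.single q 1
    · subst hα'
      have hle : Finsupp.single q 1 ≤ α + Finsupp.single q 1 := le_add_self
      have hcancel : α + Finsupp.single q 1 - Finsupp.single q 1 = α := by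
        exact add_tsub_cancel_right α (Finsupp.single q 1)
      simp only [bracketTerm, hle, if_pos, hcancel, linearHam_single, sub_zero,
        Finsupp.coe_zero, Pi.zero_apply, Int.cast_zero, zero_mul, zero_sub,
        Finsupp.single_eq_same, Nat.cast_one, one_mul, if_true, and_self]
      field_simp [hm q]
    · -- α' not the right single: either linearHam is zero or the coefficient vanishes
      rw [if_neg (by simp [hα'])]
      by_cases hj : ∃ j, α' = Finsupp.single j 1
      · obtain ⟨j, rfl⟩ := hj
        have hjq : j ≠ q := fun h => hα' (by rw [h])
        simp [bracketTerm, Finsupp.single_apply, hjq]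
      · have h0 : linearHam m ξ 0 α' = 0 := by
          simp only [linearHam, if_pos rfl]
          apply Finset.sum_eq_zero
          intro j _
          rw [if_neg (fun h => hj ⟨j, h⟩)]
        simp [bracketTerm, h0]
  · have h0 : linearHam m ξ l' α' = 0 := by simp [linearHam, hl']
    simp [bracketTerm, h0, hl']
lemma bt_summable (m : ℕ → ℝ) (hm : ∀ i, m i ≠ 0) (ξ : ℕ → ℝ) (G : FormalHam)
    (l : ℕ →₀ ℤ) (α : ℕ →₀ ℕ) :
    Summable (bracketTerm m (linearHam m ξ) G l α) := by
  apply summable_of_ne_finset_zero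
    (s := l.support.image fun q => (q, (0 : ℕ →₀ ℤ), Finsupp.single q 1))
  intro x hx
  rw [bt_eq m hm ξ G l α x]
  by_cases hc : x.2.1 = 0 ∧ x.2.2 = Finsupp.single x.1 1
  · rw [if_pos hc]
    by_cases hlq : l x.1 = 0
    · simp [hlq]
    · exfalso
      apply hx
      simp only [Finset.mem_image, Finsupp.mem_support_iff]
      exact ⟨x.1, hlq, by obtain ⟨a,b,c⟩ := x; obtain ⟨h1,h2⟩ := hc; simp_all⟩
  · rw [if_neg hc]

lemma bt_tsum (m : ℕ → ℝ) (hm : ∀ i, m i ≠ 0) (ξ : ℕ → ℝ) (G : FormalHam)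
    (l : ℕ →₀ ℤ) (α : ℕ →₀ ℕ) :
    bracket m (linearHam m ξ) G l α =
      Complex.I * (-((∑ j ∈ l.support, (l j : ℝ) * ξ j : ℝ) : ℂ) * G l α) := by
  rw [bracket]
  congr 1
  rw [tsum_eq_sum (s := l.support.image fun q => (q, (0 : ℕ →₀ ℤ), Finsupp.single q 1))
    (by
      intro x hx
      rw [bt_eq m hm ξ G l α x]
      by_cases hc : x.2.1 = 0 ∧ x.2.2 = Finsupp.single x.1 1
      · rw [if_pos hc]
        by_cases hlq : l x.1 = 0
        · simp [hlq]
        · exact absurd (Finset.mem_image.2 ⟨x.1, Finsupp.mem_support_iff.2 hlq,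
            by obtain ⟨a,b,c⟩ := x; obtain ⟨h1,h2⟩ := hc; simp_all⟩) hx
      · rw [if_neg hc])]
  rw [Finset.sum_image (by intro a _ b _ h; exact (Prod.ext_iff.1 h).1)]
  rw [show -((∑ j ∈ l.support, (l j : ℝ) * ξ j : ℝ) : ℂ) * G l α
      = ∑ q ∈ l.support, -((l q : ℂ) * (ξ q : ℂ)) * G l α by
    rw [← Finset.sum_mul]
    push_cast
    rw [← Finset.sum_neg_distrib, Finset.sum_mul]]
  apply Finset.sum_congr rfl
  intro q _
  rw [bt_eq m hm ξ G l α]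
  simp
theorem cohomological_equation
    (κ M : ℝ) (hκ : 0 < κ) (hM : 1 ≤ M) (m : ℕ → ℝ) (hm : IsMassSeq κ M m)
    (β ρ σ : ℝ) (hβ : β ∈ Set.Ioo (0 : ℝ) 1) (hρ : 0 < ρ) (hσ : 0 < σ)
    (ξ : ℕ → ℝ) (γ : ℝ) (hγ : 0 < γ)
    (Q : FormalHam) (hQfin : hamNorm m β ρ σ Q ≠ ⊤)
    (hQaff : ∀ l α, 2 ≤ a1 α → Q l α = 0)
    (hdioph : ∀ l : ℕ →₀ ℤ, l ≠ 0 → (∃ α, Q l α ≠ 0) →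
      γ ≤ |∑ j ∈ l.support, (l j : ℝ) * ξ j|) :
    (∀ l α, Summable (bracketTerm m (linearHam m ξ) (cohomSol ξ Q) l α)) ∧
    (∀ l α, bracket m (linearHam m ξ) (cohomSol ξ Q) l α + Q l α = avgHam Q l α) ∧
    hamNorm m β ρ σ (cohomSol ξ Q) ≤ ENNReal.ofReal γ⁻¹ * hamNorm m β ρ σ Q := by
  have hm0 : ∀ i, m i ≠ 0 := fun i => (hm.pos i).ne'
  refine ⟨fun l α => bt_summable m hm0 ξ _ l α, ?_, ?_⟩
  · intro l α
    rw [bt_tsum m hm0 ξ _ l α]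
    by_cases hl : l = 0
    · subst hl
      simp [cohomSol, avgHam]
    · rw [avgHam]
      rw [if_neg hl]
      by_cases hQ : Q l α = 0
      · simp [cohomSol, hl, hQ]
      · have hS : (∑ j ∈ l.support, (l j : ℝ) * ξ j) ≠ 0 := by
          have h1 := hdioph l hl ⟨α, hQ⟩
          intro h
          rw [h, abs_zero] at h1
          linarith
        have hSC : ((∑ j ∈ l.support, (l j : ℝ) * ξ j : ℝ) : ℂ) ≠ 0 :=
          Complex.ofReal_ne_zero.mpr hS
        rw [cohomSol]
        rw [if_neg hl]
        field_simp
        ring_nf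
        push_cast at hSC
        rw [Complex.I_sq]
        ring
  · -- norm bound
    have key : ∀ j p, hamTerm m β ρ σ (cohomSol ξ Q) j p ≤
        ENNReal.ofReal γ⁻¹ * hamTerm m β ρ σ Q j p := by
      intro j p
      unfold hamTerm
      by_cases hc : (hSupp p.1 p.2).max = (j : WithBot ℕ)
      · rw [if_pos hc, if_pos hc, ← ENNReal.ofReal_mul (by positivity)]
        apply ENNReal.ofReal_le_ofReal
        have habs : ‖cohomSol ξ Q p.1 p.2‖ ≤ γ⁻¹ * ‖Q p.1 p.2‖ := by
          by_cases hl : p.1 = 0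
          · simp [cohomSol, hl]
            positivity
          · by_cases hQ : Q p.1 p.2 = 0
            · simp [cohomSol, hQ]
            · have h1 := hdioph p.1 hl ⟨p.2, hQ⟩
              rw [cohomSol, if_neg hl]
              rw [norm_mul, norm_mul, norm_neg, Complex.norm_I, one_mul,
                norm_inv, Complex.norm_real, Real.norm_eq_abs]
              apply mul_le_mul_of_nonneg_right _ (norm_nonneg _)
              exact inv_anti₀ hγ h1
        have hc1 : (0:ℝ) ≤ mProd m ((hSupp p.1 p.2).erase j) ^ (-β) :=
          Real.rpow_nonneg (Finset.prod_nonneg fun i _ => (hm.pos i).le) _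
        calc mProd m ((hSupp p.1 p.2).erase j) ^ (-β) *
              ‖cohomSol ξ Q p.1 p.2‖ * ρ ^ a1 p.2 *
              Real.exp (σ * (l1 p.1 : ℝ))
            ≤ mProd m ((hSupp p.1 p.2).erase j) ^ (-β) *
              (γ⁻¹ * ‖Q p.1 p.2‖) * ρ ^ a1 p.2 *
              Real.exp (σ * (l1 p.1 : ℝ)) := by gcongr
          _ = γ⁻¹ * (mProd m ((hSupp p.1 p.2).erase j) ^ (-β) *
              ‖Q p.1 p.2‖ * ρ ^ a1 p.2 *
              Real.exp (σ * (l1 p.1 : ℝ))) := by ring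
      · simp [hc]
    rw [hamNorm, hamNorm]
    apply iSup_le
    intro j
    calc (ENNReal.ofReal (m j))⁻¹ * ∑' p, hamTerm m β ρ σ (cohomSol ξ Q) j p
        ≤ (ENNReal.ofReal (m j))⁻¹ *
          (ENNReal.ofReal γ⁻¹ * ∑' p, hamTerm m β ρ σ Q j p) := by
          apply mul_le_mul_right
          rw [← ENNReal.tsum_mul_left]
          exact ENNReal.tsum_le_tsum (key j)
      _ = ENNReal.ofReal γ⁻¹ *
          ((ENNReal.ofReal (m j))⁻¹ * ∑' p, hamTerm m β ρ σ Q j p) := by ring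
      _ ≤ ENNReal.ofReal γ⁻¹ * ⨆ i, (ENNReal.ofReal (m i))⁻¹ *
          ∑' p, hamTerm m β ρ σ Q i p := by
          exact mul_le_mul_right
            (le_iSup (fun i => (ENNReal.ofReal (m i))⁻¹ * ∑' p, hamTerm m β ρ σ Q i p) j) _
end
end

section
/- Assume S_β = sup_{q∈ℕ} Σ_{n≥0} (m_{q+n}/m_q)^{1−β} < ∞. There is a constant c > 0, depending only on S_β, with the following property. Let 0 < ρ ≤ ρ*, 0 < σ ≤ σ*, 0 < r < ρ, 0 < s < σ, and let h, g be formal Hamiltonians with ‖h‖_{β,ρ,σ} < ∞ and ‖g‖_{β,ρ*,σ*} < ∞. Then every coefficient of the Poisson bracket {h,g} is given by an absolutely summable family, and ‖{h,g}‖_{β,ρ−r,σ−s} ≤ c · max{ 1/(r(σ*−σ+s)), 1/(s(ρ*−ρ+r)) } · ‖h‖_{β,ρ,σ} · ‖g‖_{β,ρ*,σ*}. -/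
/-!
Common setting: mass sequences, formal Hamiltonians `h = (h^{[l]}_α)` indexed by
finitely supported `l : ℕ → ℤ`, `α : ℕ → ℕ`, the weighted norms `‖·‖_{β,ρ,σ}`, and
the (formal) Poisson bracket relative to the symplectic form `Σ_q m_q dJ_q ∧ dφ_q`.
-/

open scoped ENNReal NNReal BigOperators Classical

noncomputable section

/-!
STATEMENT 6 (Poisson bracket estimate, Lemma 5.1): if `S_β < ∞` then, with a constant
`c > 0` depending only on (a bound for) `S_β`, the bracket `{h,g}` is well defined and
`‖{h,g}‖_{β,ρ−r,σ−s} ≤ c·max{1/(r(σ*−σ+s)), 1/(s(ρ*−ρ+r))}·‖h‖_{β,ρ,σ}·‖g‖_{β,ρ*,σ*}`.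
-/


namespace BrE


def jOf (A : Finset ℕ) : ℕ := WithBot.unbotD 0 A.max

lemma jOf_eq_max' {A : Finset ℕ} (h : A.Nonempty) : jOf A = A.max' h := by
  unfold jOf
  rw [show A.max = ((A.max' h : ℕ) : WithBot ℕ) from (Finset.coe_max' h).symm]
  rfl

lemma max_eq_jOf {A : Finset ℕ} (h : A.Nonempty) : A.max = (jOf A : WithBot ℕ) := by
  exact (jOf_eq_max' h) ▸ (Finset.coe_max' h).symm

lemma jOf_eq_of_max {A : Finset ℕ} {j : ℕ} (h : A.max = (j : WithBot ℕ)) : jOf A = j := by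
  unfold jOf; rw [h]; rfl

lemma jOf_mem {A : Finset ℕ} (h : A.Nonempty) : jOf A ∈ A := by
  rw [jOf_eq_max' h]; exact A.max'_mem h

lemma le_jOf {A : Finset ℕ} {a : ℕ} (ha : a ∈ A) : a ≤ jOf A := by
  rw [jOf_eq_max' ⟨a, ha⟩]; exact Finset.le_max' A a ha

lemma mem_hSupp {l : ℕ →₀ ℤ} {α : ℕ →₀ ℕ} {q : ℕ} :
    q ∈ hSupp l α ↔ l q ≠ 0 ∨ α q ≠ 0 := by
  simp [hSupp, Finset.mem_union, Finsupp.mem_support_iff]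

lemma hSupp_subset {l l' l'' : ℕ →₀ ℤ} {α α' α'' : ℕ →₀ ℕ} {q : ℕ}
    (hl : l = l' + l'') (hα : α + Finsupp.single q 1 = α' + α'') :
    hSupp l α ⊆ hSupp l' α' ∪ hSupp l'' α'' := by
  intro p hp
  rcases mem_hSupp.1 hp with hp | hp
  · by_cases h1 : l' p = 0
    · have : l'' p ≠ 0 := by
        intro h2; apply hp; rw [hl]; simp [h1, h2]
      exact Finset.mem_union_right _ (mem_hSupp.2 (Or.inl this))
    · exact Finset.mem_union_left _ (mem_hSupp.2 (Or.inl h1))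
  · by_cases h1 : α' p = 0
    · have : α'' p ≠ 0 := by
        intro h2
        have := congrArg (fun f => f p) hα
        simp [h1, h2] at this
        exact hp this.1
      exact Finset.mem_union_right _ (mem_hSupp.2 (Or.inr this))
    · exact Finset.mem_union_left _ (mem_hSupp.2 (Or.inr h1))

section Mass

variable {m : ℕ → ℝ}

lemma mProd_pos (hpos : ∀ i, 0 < m i) (A : Finset ℕ) : 0 < mProd m A :=
  Finset.prod_pos fun i _ => hpos i

lemma mProd_le_one (hpos : ∀ i, 0 < m i) (hle1 : ∀ i, m i ≤ 1) (A : Finset ℕ) :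
    mProd m A ≤ 1 :=
  Finset.prod_le_one (fun i _ => (hpos i).le) (fun i _ => hle1 i)

lemma mProd_subset (hpos : ∀ i, 0 < m i) (hle1 : ∀ i, m i ≤ 1) {A B : Finset ℕ}
    (hAB : A ⊆ B) : mProd m B ≤ mProd m A := by
  have hsd := Finset.prod_sdiff (f := m) hAB
  calc mProd m B = mProd m (B \ A) * mProd m A := hsd.symm
    _ ≤ 1 * mProd m A :=
        mul_le_mul_of_nonneg_right (mProd_le_one hpos hle1 _) (mProd_pos hpos A).le
    _ = mProd m A := one_mul _

lemma mProd_erase_mul {A : Finset ℕ} {j : ℕ} (hj : j ∈ A) :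
    m j * mProd m (A.erase j) = mProd m A :=
  Finset.mul_prod_erase A m hj

lemma mProd_le_single (hpos : ∀ i, 0 < m i) (hle1 : ∀ i, m i ≤ 1) {A : Finset ℕ}
    {q : ℕ} (hq : q ∈ A) : mProd m A ≤ m q := by
  calc mProd m A = m q * mProd m (A.erase q) := (mProd_erase_mul hq).symm
    _ ≤ m q * 1 :=
        mul_le_mul_of_nonneg_left (mProd_le_one hpos hle1 _) (hpos q).le
    _ = m q := mul_one _

lemma mass_master (hpos : ∀ i, 0 < m i) (hle1 : ∀ i, m i ≤ 1) (hanti : Antitone m)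
    {A' A'' A : Finset ℕ} {q : ℕ}
    (hq' : q ∈ A') (hq'' : q ∈ A'') (hsub : A ⊆ A' ∪ A'') :
    mProd m A' * mProd m A'' ≤ m q * (m (jOf A) * mProd m (A.erase (jOf A))) := by
  have key : mProd m A' * mProd m A'' = mProd m (A' ∪ A'') * mProd m (A' ∩ A'') :=
    (Finset.prod_union_inter (s₁ := A') (s₂ := A'')).symm
  have hint : mProd m (A' ∩ A'') ≤ m q :=
    mProd_le_single hpos hle1 (Finset.mem_inter.2 ⟨hq', hq''⟩)
  rcases A.eq_empty_or_nonempty with hA | hA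
  · subst hA
    have h1 : mProd m (A' ∪ A'') ≤ m q :=
      mProd_le_single hpos hle1 (Finset.mem_union_left _ hq')
    have h2 : m q ≤ m (jOf (∅ : Finset ℕ)) := hanti (Nat.zero_le q)
    have hm0 : mProd m ((∅ : Finset ℕ).erase (jOf (∅ : Finset ℕ))) = 1 := by
      simp [mProd]
    rw [key, hm0, mul_one]
    calc mProd m (A' ∪ A'') * mProd m (A' ∩ A'') ≤ m q * m q :=
          mul_le_mul h1 hint (mProd_pos hpos _).le (hpos q).le
      _ ≤ m q * m (jOf ∅) := mul_le_mul_of_nonneg_left h2 (hpos q).le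
  · have hjmem : jOf A ∈ A := jOf_mem hA
    have hAe : m (jOf A) * mProd m (A.erase (jOf A)) = mProd m A := mProd_erase_mul hjmem
    rw [key, hAe]
    calc mProd m (A' ∪ A'') * mProd m (A' ∩ A'') ≤ mProd m A * m q :=
          mul_le_mul (mProd_subset hpos hle1 hsub) hint (mProd_pos hpos _).le
            (mProd_pos hpos A).le
      _ = m q * mProd m A := mul_comm _ _

end Mass



-- antitone of x ↦ x^(-β) on positives
lemma rpow_neg_anti {x y β : ℝ} (hx : 0 < x) (hxy : x ≤ y) (hβ : 0 ≤ β) :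
    y ^ (-β) ≤ x ^ (-β) := by
  rw [Real.rpow_neg hx.le, Real.rpow_neg (hx.trans_le hxy).le]
  exact inv_anti₀ (Real.rpow_pos_of_pos hx β) (Real.rpow_le_rpow hx.le hxy hβ)

lemma rpow_one_sub {z β : ℝ} (hz : 0 < z) : z ^ (1 - β) = z * z ^ (-β) := by
  rw [show (1 - β) = 1 + (-β) by ring, Real.rpow_add hz, Real.rpow_one]

/-- The key weight inequality. -/
lemma key_weight {β c d a b e' e'' u : ℝ}
    (hβ0 : 0 ≤ β) (hc : 0 < c) (hd : 0 < d) (ha : 0 < a) (hb : 0 < b)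
    (he' : 0 < e') (he'' : 0 < e'') (hu : 0 < u)
    (hle : (a * e') * (b * e'') ≤ c * (d * u)) :
    u ^ (-β) * c⁻¹ ≤
      d * ((a / c) ^ (1 - β) / a * ((b / d) ^ (1 - β) / b * (e' ^ (-β) * e'' ^ (-β)))) := by
  have hac : 0 < a / c := div_pos ha hc
  have hbd : 0 < b / d := div_pos hb hd
  have hw : 0 < a / c * (b / d) * e' * e'' := by positivity
  have hrw : d * ((a / c) ^ (1 - β) / a * ((b / d) ^ (1 - β) / b * (e' ^ (-β) * e'' ^ (-β))))
      = c⁻¹ * ((a / c * (b / d) * e' * e'') ^ (-β)) := by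
    rw [rpow_one_sub hac, rpow_one_sub hbd]
    rw [Real.mul_rpow (by positivity) he''.le, Real.mul_rpow (by positivity) he'.le,
      Real.mul_rpow hac.le hbd.le]
    field_simp
  rw [hrw]
  rw [mul_comm (u ^ (-β)) c⁻¹]
  apply mul_le_mul_of_nonneg_left _ (by positivity)
  apply rpow_neg_anti hw _ hβ0
  -- a/c * (b/d) * e' * e'' ≤ u
  rw [div_mul_div_comm]
  rw [div_mul_eq_mul_div, div_mul_eq_mul_div]
  rw [div_le_iff₀ (by positivity)]
  calc a * b * e' * e'' = (a * e') * (b * e'') := by ring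
    _ ≤ c * (d * u) := hle
    _ = u * (c * d) := by ring

-- payment lemmas
lemma exp_pay {t : ℝ} (ht : 0 < t) {k n : ℕ} (hk : k ≤ n) :
    (k : ℝ) * Real.exp (-(t * n)) ≤ 1 / t := by
  have hexp : t * n ≤ Real.exp (t * n) := by
    have := Real.add_one_le_exp (t * n)
    nlinarith
  have hknn : (k : ℝ) ≤ n := Nat.cast_le.2 hk
  rw [Real.exp_neg]
  rcases Nat.eq_zero_or_pos n with h0 | hn
  · subst h0
    have : (k : ℝ) = 0 := by simpa using (Nat.le_zero.1 hk)
    rw [this, zero_mul]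
    positivity
  · have hnpos : (0:ℝ) < n := by exact_mod_cast hn
    have hepos : (0:ℝ) < Real.exp (t * n) := Real.exp_pos _
    rw [div_eq_mul_inv, one_mul] at *
    have h1 : (k : ℝ) * (Real.exp (t * n))⁻¹ ≤ (n : ℝ) * (Real.exp (t * n))⁻¹ :=
      mul_le_mul_of_nonneg_right hknn (by positivity)
    have h2 : (n : ℝ) * (Real.exp (t * n))⁻¹ ≤ (n : ℝ) * (t * n)⁻¹ := by
      apply mul_le_mul_of_nonneg_left _ hnpos.le
      exact inv_anti₀ (by positivity) hexp
    have h3 : (n : ℝ) * (t * n)⁻¹ = t⁻¹ := by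
      field_simp
    linarith
  
lemma pow_pay_aux {t T : ℝ} (ht : 0 ≤ t) (htT : t ≤ T) :
    ∀ n : ℕ, ((n : ℝ) + 1) * t ^ n * (T - t) ≤ T ^ (n + 1) := by
  intro n
  induction n with
  | zero => simp only [Nat.cast_zero, pow_zero, zero_add, pow_one]; nlinarith
  | succ n ih =>
    have hT : 0 ≤ T := ht.trans htT
    have hpow : t ^ (n+1) ≤ T ^ (n+1) := pow_le_pow_left₀ ht htT _
    have h1 : ((n : ℝ) + 1 + 1) * t ^ (n+1) * (T - t)
        = (((n : ℝ) + 1) * t ^ n * (T - t)) * t + t ^ (n+1) * (T - t) := by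
      push_cast; ring
    have h2 : (((n : ℝ) + 1) * t ^ n * (T - t)) * t ≤ T ^ (n+1) * t :=
      mul_le_mul_of_nonneg_right ih ht
    have h3 : t ^ (n+1) * (T - t) ≤ T ^ (n+1) * (T - t) :=
      mul_le_mul_of_nonneg_right hpow (by linarith)
    have h4 : T ^ (n+1) * t + T ^ (n+1) * (T - t) = T ^ (n+2) := by ring
    push_cast at h1 ⊢
    nlinarith [h1, h2, h3, h4]

lemma pow_pay {t T : ℝ} (ht : 0 ≤ t) (htT : t < T) {k n : ℕ} (hk : k ≤ n) :
    (k : ℝ) * t ^ (n - 1) / T ^ n ≤ 1 / (T - t) := by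
  have hT : 0 < T := lt_of_le_of_lt ht htT
  rcases Nat.eq_zero_or_pos n with h0 | hn
  · subst h0
    have : k = 0 := Nat.le_zero.1 hk
    subst this
    simp only [Nat.cast_zero, zero_mul, zero_div]
    have : 0 < T - t := by linarith
    positivity
  · obtain ⟨nn, rfl⟩ := Nat.exists_eq_add_of_le hn
    have hkle : (k : ℝ) ≤ (nn : ℝ) + 1 := by
      have : k ≤ nn + 1 := by omega
      exact_mod_cast this
    have haux := pow_pay_aux ht htT.le nn
    have h1 : (k : ℝ) * t ^ (1 + nn - 1) * (T - t) ≤ T ^ (1 + nn) := by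
      have : (k : ℝ) * t ^ nn * (T - t) ≤ ((nn : ℝ) + 1) * t ^ nn * (T - t) := by
        apply mul_le_mul_of_nonneg_right (mul_le_mul_of_nonneg_right hkle (by positivity))
        linarith
      calc (k : ℝ) * t ^ (1 + nn - 1) * (T - t) = (k : ℝ) * t ^ nn * (T - t) := by
            norm_num
        _ ≤ ((nn : ℝ) + 1) * t ^ nn * (T - t) := this
        _ ≤ T ^ (nn + 1) := haux
        _ = T ^ (1 + nn) := by rw [add_comm]
    rw [div_le_div_iff₀ (by positivity) (by linarith)]
    calc (k : ℝ) * t ^ (1 + nn - 1) * (T - t) ≤ T ^ (1 + nn) := h1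
      _ = 1 * T ^ (1 + nn) := (one_mul _).symm



lemma a1_add (α β : ℕ →₀ ℕ) : a1 (α + β) = a1 α + a1 β :=
  Finsupp.sum_add_index' (fun _ => rfl) (fun _ _ _ => rfl)

lemma a1_single (q : ℕ) : a1 (Finsupp.single q 1) = 1 := by
  unfold a1
  rw [Finsupp.sum_single_index rfl]

lemma l1_eq_sum {l : ℕ →₀ ℤ} {t : Finset ℕ} (ht : l.support ⊆ t) :
    (l1 l : ℝ) = ∑ i ∈ t, ((l i).natAbs : ℝ) := by
  unfold l1
  rw [Finsupp.sum_of_support_subset l ht (fun _ v => v.natAbs) (fun i _ => rfl)]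
  push_cast
  rfl

lemma l1_add_le (u v : ℕ →₀ ℤ) : l1 (u + v) ≤ l1 u + l1 v := by
  have hsub : (u + v).support ⊆ u.support ∪ v.support := Finsupp.support_add
  have h1 : ((l1 (u+v) : ℝ)) = ∑ i ∈ u.support ∪ v.support, (((u+v) i).natAbs : ℝ) :=
    l1_eq_sum hsub
  have h2 : ((l1 u : ℝ)) = ∑ i ∈ u.support ∪ v.support, ((u i).natAbs : ℝ) :=
    l1_eq_sum (Finset.subset_union_left)
  have h3 : ((l1 v : ℝ)) = ∑ i ∈ u.support ∪ v.support, ((v i).natAbs : ℝ) :=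
    l1_eq_sum (Finset.subset_union_right)
  have : (l1 (u+v) : ℝ) ≤ (l1 u : ℝ) + (l1 v : ℝ) := by
    rw [h1, h2, h3, ← Finset.sum_add_distrib]
    apply Finset.sum_le_sum
    intro i _
    have := Int.natAbs_add_le (u i) (v i)
    exact_mod_cast this
  exact_mod_cast this

lemma coord_le_l1 (l : ℕ →₀ ℤ) (q : ℕ) : (l q).natAbs ≤ l1 l := by
  by_cases hq : q ∈ l.support
  · exact Finset.single_le_sum (f := fun i => (l i).natAbs) (fun i _ => Nat.zero_le _) hq
  · simp only [Finsupp.notMem_support_iff] at hq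
    simp [hq]

lemma coord_le_a1 (α : ℕ →₀ ℕ) (q : ℕ) : α q ≤ a1 α := by
  by_cases hq : q ∈ α.support
  · exact Finset.single_le_sum (f := fun i => α i) (fun i _ => Nat.zero_le _) hq
  · simp only [Finsupp.notMem_support_iff] at hq
    simp [hq]

/-- tsum over ℕ of `coordinate * const` for a ℕ-finsupp. -/
lemma tsum_coord_mul (α : ℕ →₀ ℕ) (C : ℝ) (hC : 0 ≤ C) :
    ∑' q : ℕ, ENNReal.ofReal ((α q : ℝ) * C) = ENNReal.ofReal ((a1 α : ℝ) * C) := by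
  have hz : ∀ q ∉ α.support, ENNReal.ofReal ((α q : ℝ) * C) = 0 := by
    intro q hq
    simp only [Finsupp.notMem_support_iff] at hq
    simp [hq]
  rw [tsum_eq_sum hz]
  rw [← ENNReal.ofReal_sum_of_nonneg (fun i _ => by positivity)]
  congr 1
  rw [← Finset.sum_mul]
  congr 1
  unfold a1
  rw [Finsupp.sum]
  push_cast
  rfl

lemma tsum_coordZ_mul (l : ℕ →₀ ℤ) (C : ℝ) (hC : 0 ≤ C) :
    ∑' q : ℕ, ENNReal.ofReal (((l q).natAbs : ℝ) * C) = ENNReal.ofReal ((l1 l : ℝ) * C) := by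
  have hz : ∀ q ∉ l.support, ENNReal.ofReal (((l q).natAbs : ℝ) * C) = 0 := by
    intro q hq
    simp only [Finsupp.notMem_support_iff] at hq
    simp [hq]
  rw [tsum_eq_sum hz]
  rw [← ENNReal.ofReal_sum_of_nonneg (fun i _ => by positivity)]
  congr 1
  rw [← Finset.sum_mul]
  congr 1
  unfold l1
  rw [Finsupp.sum]
  push_cast
  rfl


end BrE

namespace BrE

abbrev Pa := (ℕ →₀ ℤ) × (ℕ →₀ ℕ)
abbrev XX := ℕ × (ℕ →₀ ℤ) × (ℕ →₀ ℕ)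

def jA (p : Pa) : ℕ := jOf (hSupp p.1 p.2)

section Sums

variable (m : ℕ → ℝ) (β : ℝ)

def bw (a b : ℕ) : ℝ≥0∞ :=
  if a ≤ b then ENNReal.ofReal ((m b / m a) ^ (1 - β) / m b) else 0

variable {m β}

lemma sum_bw_le {SS : ℝ≥0∞}
    (hS : ∀ q₀ : ℕ, ∑' n : ℕ, ENNReal.ofReal ((m (q₀ + n) / m q₀) ^ (1 - β)) ≤ SS)
    (q₀ : ℕ) :
    ∑' j₀ : ℕ, (if q₀ ≤ j₀ then ENNReal.ofReal ((m j₀ / m q₀) ^ (1 - β)) else 0) ≤ SS := by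
  have hinj : Function.Injective (fun n : ℕ => q₀ + n) := fun a b hab => by
    simp only [add_right_inj] at hab; exact hab
  have hsupp : Function.support
      (fun j₀ : ℕ => if q₀ ≤ j₀ then ENNReal.ofReal ((m j₀ / m q₀) ^ (1 - β)) else 0)
      ⊆ Set.range (fun n : ℕ => q₀ + n) := by
    intro j₀ hj₀
    simp only [Function.mem_support] at hj₀
    by_cases h : q₀ ≤ j₀
    · exact ⟨j₀ - q₀, by show q₀ + (j₀ - q₀) = j₀; omega⟩
    · simp [h] at hj₀
  rw [← hinj.tsum_eq hsupp]
  simp only [le_add_iff_nonneg_right, Nat.zero_le, if_true]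
  exact hS q₀

lemma inner_sum (hpos : ∀ i, 0 < m i) {SS : ℝ≥0∞}
    (hS : ∀ q₀ : ℕ, ∑' n : ℕ, ENNReal.ofReal ((m (q₀ + n) / m q₀) ^ (1 - β)) ≤ SS)
    (T : ℕ → Pa → ℝ≥0∞) (N : ℝ≥0∞)
    (hT : ∀ j₀ : ℕ, ∑' p : Pa, T j₀ p ≤ ENNReal.ofReal (m j₀) * N)
    (q₀ : ℕ) :
    ∑' p : Pa, bw m β q₀ (jA p) * T (jA p) p ≤ SS * N := by
  have step1 : ∀ p : Pa, bw m β q₀ (jA p) * T (jA p) p ≤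
      ∑' j₀ : ℕ, bw m β q₀ j₀ * T j₀ p := fun p =>
    ENNReal.le_tsum (jA p)
  calc ∑' p : Pa, bw m β q₀ (jA p) * T (jA p) p
      ≤ ∑' p : Pa, ∑' j₀ : ℕ, bw m β q₀ j₀ * T j₀ p := ENNReal.tsum_le_tsum step1
    _ = ∑' j₀ : ℕ, ∑' p : Pa, bw m β q₀ j₀ * T j₀ p := ENNReal.tsum_comm
    _ = ∑' j₀ : ℕ, bw m β q₀ j₀ * ∑' p : Pa, T j₀ p := by
        congr 1; funext j₀; exact ENNReal.tsum_mul_left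
    _ ≤ ∑' j₀ : ℕ, bw m β q₀ j₀ * (ENNReal.ofReal (m j₀) * N) := by
        exact ENNReal.tsum_le_tsum fun j₀ => mul_le_mul_right (hT j₀) _
    _ ≤ ∑' j₀ : ℕ, (if q₀ ≤ j₀ then ENNReal.ofReal ((m j₀ / m q₀) ^ (1 - β)) else 0) * N := by
        apply ENNReal.tsum_le_tsum
        intro j₀
        unfold bw
        by_cases h : q₀ ≤ j₀
        · simp only [h, if_true]
          have hnn : (0:ℝ) ≤ (m j₀ / m q₀) ^ (1 - β) / m j₀ :=
            div_nonneg (Real.rpow_nonneg (div_nonneg (hpos j₀).le (hpos q₀).le) _) (hpos j₀).le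
          rw [← mul_assoc, ← ENNReal.ofReal_mul hnn]
          rw [div_mul_cancel₀ _ (hpos j₀).ne']
        · simp [h]
    _ = (∑' j₀ : ℕ, (if q₀ ≤ j₀ then ENNReal.ofReal ((m j₀ / m q₀) ^ (1 - β)) else 0)) * N :=
        ENNReal.tsum_mul_right
    _ ≤ SS * N := mul_le_mul_left (sum_bw_le hS q₀) _

/-- The generic double-block summation lemma. -/
lemma GEN (hpos : ∀ i, 0 < m i) {SS : ℝ≥0∞}
    (hS : ∀ q₀ : ℕ, ∑' n : ℕ, ENNReal.ofReal ((m (q₀ + n) / m q₀) ^ (1 - β)) ≤ SS)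
    (j : ℕ) (T₁ T₂ : ℕ → Pa → ℝ≥0∞) (N₁ N₂ Ka Kb : ℝ≥0∞)
    (hT₁ : ∀ j₀ : ℕ, ∑' p : Pa, T₁ j₀ p ≤ ENNReal.ofReal (m j₀) * N₁)
    (hT₂ : ∀ j₀ : ℕ, ∑' p : Pa, T₂ j₀ p ≤ ENNReal.ofReal (m j₀) * N₂)
    (a b : ℕ → Pa → ℝ≥0∞)
    (ha : ∀ q p, a q p ≤ Ka * T₁ (jA p) p)
    (hb : ∀ p, ∑' q : ℕ, b q p ≤ Kb * T₂ (jA p) p) :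
    ∑' y : ℕ × Pa × Pa,
      bw m β y.1 (jA y.2.1) * bw m β j (jA y.2.2) * a y.1 y.2.1 * b y.1 y.2.2 ≤
      Ka * Kb * SS * SS * N₁ * N₂ := by
  have hinner : ∀ q : ℕ, ∑' p : Pa, bw m β q (jA p) * a q p ≤ Ka * (SS * N₁) := by
    intro q
    calc ∑' p : Pa, bw m β q (jA p) * a q p
        ≤ ∑' p : Pa, bw m β q (jA p) * (Ka * T₁ (jA p) p) :=
          ENNReal.tsum_le_tsum fun p => mul_le_mul_right (ha q p) _
      _ = Ka * ∑' p : Pa, bw m β q (jA p) * T₁ (jA p) p := by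
          rw [← ENNReal.tsum_mul_left]
          congr 1; funext p; ring
      _ ≤ Ka * (SS * N₁) := mul_le_mul_right (inner_sum hpos hS T₁ N₁ hT₁ q) _
  calc ∑' y : ℕ × Pa × Pa,
        bw m β y.1 (jA y.2.1) * bw m β j (jA y.2.2) * a y.1 y.2.1 * b y.1 y.2.2
      = ∑' q : ℕ, ∑' p₁ : Pa, ∑' p₂ : Pa,
          bw m β q (jA p₁) * bw m β j (jA p₂) * a q p₁ * b q p₂ := by
        rw [ENNReal.tsum_prod (f := fun (q : ℕ) (pp : Pa × Pa) =>
          bw m β q (jA pp.1) * bw m β j (jA pp.2) * a q pp.1 * b q pp.2)]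
        congr 1; funext q
        exact ENNReal.tsum_prod (f := fun (p₁ : Pa) (p₂ : Pa) =>
          bw m β q (jA p₁) * bw m β j (jA p₂) * a q p₁ * b q p₂)
    _ = ∑' q : ℕ, ∑' p₂ : Pa, ∑' p₁ : Pa,
          bw m β q (jA p₁) * bw m β j (jA p₂) * a q p₁ * b q p₂ := by
        congr 1; funext q; exact ENNReal.tsum_comm
    _ = ∑' p₂ : Pa, ∑' q : ℕ, ∑' p₁ : Pa,
          bw m β q (jA p₁) * bw m β j (jA p₂) * a q p₁ * b q p₂ := ENNReal.tsum_comm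
    _ = ∑' p₂ : Pa, ∑' q : ℕ, (bw m β j (jA p₂) * b q p₂) *
          ∑' p₁ : Pa, bw m β q (jA p₁) * a q p₁ := by
        congr 1; funext p₂; congr 1; funext q
        rw [← ENNReal.tsum_mul_left]
        congr 1; funext p₁; ring
    _ ≤ ∑' p₂ : Pa, ∑' q : ℕ, (bw m β j (jA p₂) * b q p₂) * (Ka * (SS * N₁)) := by
        apply ENNReal.tsum_le_tsum; intro p₂
        apply ENNReal.tsum_le_tsum; intro q
        exact mul_le_mul_right (hinner q) _
    _ = ∑' p₂ : Pa, (bw m β j (jA p₂) * (∑' q : ℕ, b q p₂)) * (Ka * (SS * N₁)) := by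
        congr 1; funext p₂
        rw [ENNReal.tsum_mul_right, ENNReal.tsum_mul_left]
    _ ≤ ∑' p₂ : Pa, (bw m β j (jA p₂) * (Kb * T₂ (jA p₂) p₂)) * (Ka * (SS * N₁)) := by
        apply ENNReal.tsum_le_tsum; intro p₂
        exact mul_le_mul_left (mul_le_mul_right (hb p₂) _) _
    _ = (Kb * (Ka * (SS * N₁))) * ∑' p₂ : Pa, bw m β j (jA p₂) * T₂ (jA p₂) p₂ := by
        rw [← ENNReal.tsum_mul_left]
        congr 1; funext p₂; ring
    _ ≤ (Kb * (Ka * (SS * N₁))) * (SS * N₂) :=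
        mul_le_mul_right (inner_sum hpos hS T₂ N₂ hT₂ j) _
    _ = Ka * Kb * SS * SS * N₁ * N₂ := by ring

end Sums

end BrE

namespace BrE

section Factors

lemma fl_le {t : ℝ} (ht : 0 < t) (q : ℕ) (p : Pa) :
    ((p.1 q).natAbs : ℝ) * Real.exp (-(t * (l1 p.1 : ℝ))) ≤ 1 / t :=
  exp_pay ht (coord_le_l1 p.1 q)

lemma tsum_fl {t : ℝ} (ht : 0 < t) (p : Pa) :
    ∑' q : ℕ, ENNReal.ofReal (((p.1 q).natAbs : ℝ) * Real.exp (-(t * (l1 p.1 : ℝ)))) ≤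
      ENNReal.ofReal (1 / t) := by
  rw [tsum_coordZ_mul p.1 _ (Real.exp_nonneg _)]
  exact ENNReal.ofReal_le_ofReal (exp_pay ht le_rfl)

lemma fα_le {ρ' T : ℝ} (hρ' : 0 ≤ ρ') (hT : ρ' < T) (q : ℕ) (p : Pa) :
    (p.2 q : ℝ) * ρ' ^ (a1 p.2 - 1) / T ^ (a1 p.2) ≤ 1 / (T - ρ') := by
  rw [mul_div_assoc]
  have := pow_pay hρ' hT (coord_le_a1 p.2 q)
  rw [mul_div_assoc] at this
  exact this

lemma tsum_fα {ρ' T : ℝ} (hρ' : 0 ≤ ρ') (hT : ρ' < T) (p : Pa) :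
    ∑' q : ℕ, ENNReal.ofReal ((p.2 q : ℝ) * ρ' ^ (a1 p.2 - 1) / T ^ (a1 p.2)) ≤
      ENNReal.ofReal (1 / (T - ρ')) := by
  have hTpos : 0 < T := lt_of_le_of_lt hρ' hT
  have hCnn : 0 ≤ ρ' ^ (a1 p.2 - 1) / T ^ (a1 p.2) := by positivity
  have heq : ∀ q : ℕ, (p.2 q : ℝ) * ρ' ^ (a1 p.2 - 1) / T ^ (a1 p.2) =
      (p.2 q : ℝ) * (ρ' ^ (a1 p.2 - 1) / T ^ (a1 p.2)) := fun q => mul_div_assoc _ _ _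
  simp only [heq]
  rw [tsum_coord_mul p.2 _ hCnn]
  rw [← mul_div_assoc]
  have := pow_pay hρ' hT (le_refl (a1 p.2))
  exact ENNReal.ofReal_le_ofReal this

lemma hamTerm_ne_zero_max {m : ℕ → ℝ} {β ρ σ : ℝ} {h : FormalHam} {j₀ : ℕ} {p : Pa}
    (hne : hamTerm m β ρ σ h j₀ p ≠ 0) : (hSupp p.1 p.2).max = (j₀ : WithBot ℕ) := by
  by_contra hc
  apply hne
  unfold hamTerm
  rw [if_neg hc]

lemma tsum_hamTerm_le {m : ℕ → ℝ} (hpos : ∀ i, 0 < m i) {β ρ σ : ℝ} (h : FormalHam)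
    (j₀ : ℕ) :
    ∑' p : Pa, hamTerm m β ρ σ h j₀ p ≤ ENNReal.ofReal (m j₀) * hamNorm m β ρ σ h := by
  have h1 : (ENNReal.ofReal (m j₀))⁻¹ * ∑' p : Pa, hamTerm m β ρ σ h j₀ p ≤
      hamNorm m β ρ σ h := le_iSup (fun j => (ENNReal.ofReal (m j))⁻¹ *
        ∑' p : Pa, hamTerm m β ρ σ h j p) j₀
  have hne : ENNReal.ofReal (m j₀) ≠ 0 := by
    simp [ENNReal.ofReal_eq_zero, not_le, hpos j₀]
  have hnetop : ENNReal.ofReal (m j₀) ≠ ⊤ := ENNReal.ofReal_ne_top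
  calc ∑' p : Pa, hamTerm m β ρ σ h j₀ p
      = ENNReal.ofReal (m j₀) * ((ENNReal.ofReal (m j₀))⁻¹ *
          ∑' p : Pa, hamTerm m β ρ σ h j₀ p) := by
        rw [← mul_assoc, ENNReal.mul_inv_cancel hne hnetop, one_mul]
    _ ≤ ENNReal.ofReal (m j₀) * hamNorm m β ρ σ h := mul_le_mul_right h1 _

lemma hamTerm_val {m : ℕ → ℝ} {β ρ σ : ℝ} {h : FormalHam} {p : Pa}
    (hne : (hSupp p.1 p.2).Nonempty) :
    hamTerm m β ρ σ h (jA p) p =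
      ENNReal.ofReal (mProd m ((hSupp p.1 p.2).erase (jA p)) ^ (-β) *
        (norm : ℂ → ℝ) (h p.1 p.2) * ρ ^ a1 p.2 * Real.exp (σ * (l1 p.1 : ℝ))) := by
  unfold hamTerm jA
  rw [if_pos (max_eq_jOf hne)]

end Factors

end BrE

namespace BrE

section Key

variable {m : ℕ → ℝ} {β ρ ρs σ σs r s : ℝ} (h g : FormalHam)

/-- `a`-factor piece 1 (h-side): `|l'_q| e^{-s|l'|₁} · HT`. -/
def ah1 (m : ℕ → ℝ) (β ρ σ s : ℝ) (h : FormalHam) (q : ℕ) (p : Pa) : ℝ≥0∞ :=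
  ENNReal.ofReal (((p.1 q).natAbs : ℝ) * Real.exp (-(s * (l1 p.1 : ℝ)))) *
    hamTerm m β ρ σ h (jA p) p

/-- `b`-factor piece 1 (g-side): `α''_q (ρ-r)^{|α''|-1} / ρs^{|α''|} · GT`. -/
def bg1 (m : ℕ → ℝ) (β ρ ρs σs r : ℝ) (g : FormalHam) (q : ℕ) (p : Pa) : ℝ≥0∞ :=
  ENNReal.ofReal ((p.2 q : ℝ) * (ρ - r) ^ (a1 p.2 - 1) / ρs ^ (a1 p.2)) *
    hamTerm m β ρs σs g (jA p) p

/-- `a`-factor piece 2 (h-side): `α'_q (ρ-r)^{|α'|-1} / ρ^{|α'|} · HT`. -/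
def ah2 (m : ℕ → ℝ) (β ρ σ r : ℝ) (h : FormalHam) (q : ℕ) (p : Pa) : ℝ≥0∞ :=
  ENNReal.ofReal ((p.2 q : ℝ) * (ρ - r) ^ (a1 p.2 - 1) / ρ ^ (a1 p.2)) *
    hamTerm m β ρ σ h (jA p) p

/-- `b`-factor piece 2 (g-side): `|l''_q| e^{-(σs-σ+s)|l''|₁} · GT`. -/
def bg2 (m : ℕ → ℝ) (β ρs σ σs s : ℝ) (g : FormalHam) (q : ℕ) (p : Pa) : ℝ≥0∞ :=
  ENNReal.ofReal (((p.1 q).natAbs : ℝ) * Real.exp (-((σs - σ + s) * (l1 p.1 : ℝ)))) *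
    hamTerm m β ρs σs g (jA p) p

def GENF (m : ℕ → ℝ) (β : ℝ) (j : ℕ) (a b : ℕ → Pa → ℝ≥0∞) (y : ℕ × Pa × Pa) : ℝ≥0∞ :=
  bw m β y.1 (jA y.2.1) * bw m β j (jA y.2.2) * a y.1 y.2.1 * b y.1 y.2.2

def ψa (p : Pa) (x : XX) : ℕ × Pa × Pa :=
  (x.1, (x.2.1, x.2.2), (p.1 - x.2.1, p.2 + Finsupp.single x.1 1 - x.2.2))

def ψb (p : Pa) (x : XX) : ℕ × Pa × Pa :=
  (x.1, (p.1 - x.2.1, p.2 + Finsupp.single x.1 1 - x.2.2), (x.2.1, x.2.2))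

lemma jA_le_max {p : Pa} {A' A'' : Finset ℕ}
    (hsub : hSupp p.1 p.2 ⊆ A' ∪ A'') (hA' : A'.Nonempty) (hA'' : A''.Nonempty) :
    jA p ≤ max (jOf A') (jOf A'') := by
  rcases (hSupp p.1 p.2).eq_empty_or_nonempty with hA | hA
  · unfold jA
    rw [hA]
    show jOf ∅ ≤ _
    unfold jOf
    simp
  · have := jOf_mem hA
    rcases Finset.mem_union.1 (hsub this) with hmem | hmem
    · exact le_trans (le_jOf hmem) (le_max_left _ _)
    · exact le_trans (le_jOf hmem) (le_max_right _ _)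

end Key

end BrE

namespace BrE

lemma ofm {x y : ℝ} (hx : 0 ≤ x) :
    ENNReal.ofReal x * ENNReal.ofReal y = ENNReal.ofReal (x * y) :=
  (ENNReal.ofReal_mul hx).symm

lemma collapse5 {mj w1 w2 f1 H1 f2 H2 : ℝ} (hmj : 0 ≤ mj) (hw1 : 0 ≤ w1)
    (hw2 : 0 ≤ w2) (hf1 : 0 ≤ f1) (hH1 : 0 ≤ H1) (hf2 : 0 ≤ f2) :
    ENNReal.ofReal mj * (ENNReal.ofReal w1 * ENNReal.ofReal w2 *
      (ENNReal.ofReal f1 * ENNReal.ofReal H1) * (ENNReal.ofReal f2 * ENNReal.ofReal H2)) =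
    ENNReal.ofReal (mj * (w1 * w2 * (f1 * H1) * (f2 * H2))) := by
  rw [ofm hf1, ofm hf2, ofm hw1, ofm (mul_nonneg hw1 hw2),
    ofm (mul_nonneg (mul_nonneg hw1 hw2) (mul_nonneg hf1 hH1)), ofm hmj]

section Piece

variable {m : ℕ → ℝ} {β ρ ρs σ σs r s : ℝ} {h g : FormalHam}

lemma piece1 (hpos : ∀ i, 0 < m i) (hle1 : ∀ i, m i ≤ 1) (hanti : Antitone m)
    (hβ0 : 0 < β) (hβ1 : β < 1)
    (hρ : 0 < ρ) (hρρs : ρ ≤ ρs) (hσ : 0 < σ) (hσσs : σ ≤ σs)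
    (hr : 0 < r) (hrρ : r < ρ) (hs : 0 < s) (hsσ : s < σ)
    (p : Pa) (q : ℕ) (l' : ℕ →₀ ℤ) (α' : ℕ →₀ ℕ)
    (hcond : α' ≤ p.2 + Finsupp.single q 1) :
    ENNReal.ofReal (mProd m ((hSupp p.1 p.2).erase (jA p)) ^ (-β) * (m q)⁻¹ *
        ((((l' q).natAbs : ℝ) * (((p.2 + Finsupp.single q 1 - α' : ℕ →₀ ℕ) q : ℕ) : ℝ))) *
        (norm : ℂ → ℝ) (h l' α') *
        (norm : ℂ → ℝ) (g (p.1 - l') (p.2 + Finsupp.single q 1 - α')) *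
        (ρ - r) ^ a1 p.2 * Real.exp ((σ - s) * (l1 p.1 : ℝ)))
    ≤ ENNReal.ofReal (m (jA p)) *
        (GENF m β (jA p) (ah1 m β ρ σ s h) (bg1 m β ρ ρs σs r g) (ψa p (q, l', α')) +
         GENF m β (jA p) (bg1 m β ρ ρs σs r g) (ah1 m β ρ σ s h) (ψb p (q, l', α'))) := by
  set l'' : ℕ →₀ ℤ := p.1 - l' with hl''
  set α'' : ℕ →₀ ℕ := p.2 + Finsupp.single q 1 - α' with hα''
  by_cases hk : (((l' q).natAbs : ℝ) * ((α'' q : ℕ) : ℝ)) = 0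
  · simp only [← hα'', hk]
    simp
  · have hρr : 0 < ρ - r := by linarith
    have hσs' : 0 < σ - s := by linarith
    have hρs : 0 < ρs := by linarith
    have hσspos : 0 < σs := by linarith
    obtain ⟨hk1, hk2⟩ := mul_ne_zero_iff.1 hk
    have hl'q : l' q ≠ 0 := by
      intro hz; apply hk1; rw [hz]; simp
    have hα''q : α'' q ≠ 0 := by
      intro hz; apply hk2; rw [hz]; simp
    have hq' : q ∈ hSupp l' α' := mem_hSupp.2 (Or.inl hl'q)
    have hq'' : q ∈ hSupp l'' α'' := mem_hSupp.2 (Or.inr hα''q)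
    have hA'ne : (hSupp l' α').Nonempty := ⟨q, hq'⟩
    have hA''ne : (hSupp l'' α'').Nonempty := ⟨q, hq''⟩
    have hladd : p.1 = l' + l'' := by rw [hl'']; abel
    have hαadd : p.2 + Finsupp.single q 1 = α' + α'' := by
      rw [hα'', add_tsub_cancel_of_le hcond]
    have hsub : hSupp p.1 p.2 ⊆ hSupp l' α' ∪ hSupp l'' α'' :=
      hSupp_subset hladd hαadd
    have ha1 : a1 α' + a1 α'' = a1 p.2 + 1 := by
      rw [← a1_add, ← hαadd, a1_add, a1_single]
    have hα''pos : 1 ≤ a1 α'' :=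
      le_trans (Nat.one_le_iff_ne_zero.2 hα''q) (coord_le_a1 α'' q)
    -- masses
    have hmassle : (m (jA (l', α')) * mProd m ((hSupp l' α').erase (jA (l', α')))) *
        (m (jA (l'', α'')) * mProd m ((hSupp l'' α'').erase (jA (l'', α'')))) ≤
        m q * (m (jA p) * mProd m ((hSupp p.1 p.2).erase (jA p))) := by
      rw [show m (jA (l', α')) * mProd m ((hSupp l' α').erase (jA (l', α'))) =
            mProd m (hSupp l' α') from mProd_erase_mul (jOf_mem hA'ne),
          show m (jA (l'', α'')) * mProd m ((hSupp l'' α'').erase (jA (l'', α''))) =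
            mProd m (hSupp l'' α'') from mProd_erase_mul (jOf_mem hA''ne)]
      exact mass_master hpos hle1 hanti hq' hq'' hsub
    have massI := key_weight (β := β) hβ0.le (hpos q) (hpos (jA p)) (hpos (jA (l', α')))
      (hpos (jA (l'', α''))) (mProd_pos hpos ((hSupp l' α').erase (jA (l', α'))))
      (mProd_pos hpos ((hSupp l'' α'').erase (jA (l'', α''))))
      (mProd_pos hpos ((hSupp p.1 p.2).erase (jA p))) hmassle
    -- scalar inequality
    have hLle : (l1 p.1 : ℝ) ≤ (l1 l' : ℝ) + (l1 l'' : ℝ) := by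
      have := l1_add_le l' l''
      rw [← hladd] at this
      exact_mod_cast this
    have hexpI : Real.exp ((σ - s) * (l1 p.1 : ℝ)) ≤
        Real.exp ((σ - s) * (l1 l' : ℝ)) * Real.exp (σs * (l1 l'' : ℝ)) := by
      rw [← Real.exp_add]
      apply Real.exp_le_exp.2
      have h2 : (0:ℝ) ≤ (l1 l'' : ℝ) := Nat.cast_nonneg _
      nlinarith
    have hpowI : (ρ - r) ^ a1 p.2 ≤ ρ ^ a1 α' * (ρ - r) ^ (a1 α'' - 1) := by
      have hsplit : a1 p.2 = a1 α' + (a1 α'' - 1) := by omega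
      rw [hsplit, pow_add]
      apply mul_le_mul_of_nonneg_right _ (by positivity)
      exact pow_le_pow_left₀ hρr.le (by linarith) _
    have scalarI : (((l' q).natAbs : ℝ) * ((α'' q : ℕ) : ℝ)) * (ρ - r) ^ a1 p.2 *
        Real.exp ((σ - s) * (l1 p.1 : ℝ)) ≤
        (((l' q).natAbs : ℝ) * Real.exp (-(s * (l1 l' : ℝ)))) *
          (ρ ^ a1 α' * Real.exp (σ * (l1 l' : ℝ))) *
          (((α'' q : ℕ) : ℝ) * (ρ - r) ^ (a1 α'' - 1) / ρs ^ (a1 α'') *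
            (ρs ^ a1 α'' * Real.exp (σs * (l1 l'' : ℝ)))) := by
      have step : (((l' q).natAbs : ℝ) * ((α'' q : ℕ) : ℝ)) * (ρ - r) ^ a1 p.2 *
          Real.exp ((σ - s) * (l1 p.1 : ℝ)) ≤
          (((l' q).natAbs : ℝ) * ((α'' q : ℕ) : ℝ)) *
            (ρ ^ a1 α' * (ρ - r) ^ (a1 α'' - 1)) *
            (Real.exp ((σ - s) * (l1 l' : ℝ)) * Real.exp (σs * (l1 l'' : ℝ))) := by
        apply mul_le_mul (mul_le_mul_of_nonneg_left hpowI (by positivity)) hexpI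
          (Real.exp_nonneg _) (by positivity)
      refine le_trans step (le_of_eq ?_)
      have hee : Real.exp ((σ - s) * (l1 l' : ℝ)) =
          Real.exp (-(s * (l1 l' : ℝ))) * Real.exp (σ * (l1 l' : ℝ)) := by
        rw [← Real.exp_add]
        congr 1
        ring
      rw [hee]
      field_simp
    -- nonnegativity facts
    have hW'nn : (0:ℝ) ≤ mProd m ((hSupp l' α').erase (jA (l', α'))) ^ (-β) :=
      Real.rpow_nonneg (mProd_pos hpos _).le _
    have hW''nn : (0:ℝ) ≤ mProd m ((hSupp l'' α'').erase (jA (l'', α''))) ^ (-β) :=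
      Real.rpow_nonneg (mProd_pos hpos _).le _
    have hWnn : (0:ℝ) ≤ mProd m ((hSupp p.1 p.2).erase (jA p)) ^ (-β) :=
      Real.rpow_nonneg (mProd_pos hpos _).le _
    have habsnn : (0:ℝ) ≤ (norm : ℂ → ℝ) (h l' α') * (norm : ℂ → ℝ) (g l'' α'') :=
      mul_nonneg (norm_nonneg _) (norm_nonneg _)
    have hsLnn : (0:ℝ) ≤ (((l' q).natAbs : ℝ) * ((α'' q : ℕ) : ℝ)) * (ρ - r) ^ a1 p.2 *
        Real.exp ((σ - s) * (l1 p.1 : ℝ)) :=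
      mul_nonneg (mul_nonneg (by positivity) (pow_nonneg hρr.le _)) (Real.exp_nonneg _)
    have hsRnn : (0:ℝ) ≤ (((l' q).natAbs : ℝ) * Real.exp (-(s * (l1 l' : ℝ)))) *
          (ρ ^ a1 α' * Real.exp (σ * (l1 l' : ℝ))) *
          (((α'' q : ℕ) : ℝ) * (ρ - r) ^ (a1 α'' - 1) / ρs ^ (a1 α'') *
            (ρs ^ a1 α'' * Real.exp (σs * (l1 l'' : ℝ)))) := hsLnn.trans scalarI
    have hmLnn : (0:ℝ) ≤ mProd m ((hSupp p.1 p.2).erase (jA p)) ^ (-β) * (m q)⁻¹ :=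
      mul_nonneg hWnn (inv_nonneg.2 (hpos q).le)
    have hf1hnn : (0:ℝ) ≤ ((l' q).natAbs : ℝ) * Real.exp (-(s * (l1 l' : ℝ))) := by
      positivity
    have hf1gnn : (0:ℝ) ≤ ((α'' q : ℕ) : ℝ) * (ρ - r) ^ (a1 α'' - 1) / ρs ^ (a1 α'') :=
      div_nonneg (mul_nonneg (Nat.cast_nonneg _) (pow_nonneg hρr.le _)) (pow_nonneg hρs.le _)
    have hHvnn : (0:ℝ) ≤ mProd m ((hSupp l' α').erase (jA (l', α'))) ^ (-β) *
        (norm : ℂ → ℝ) (h l' α') * ρ ^ a1 α' * Real.exp (σ * (l1 l' : ℝ)) :=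
      mul_nonneg (mul_nonneg (mul_nonneg hW'nn (norm_nonneg _))
        (by positivity)) (Real.exp_nonneg _)
    have hw1ann : (0:ℝ) ≤ (m (jA (l', α')) / m q) ^ (1 - β) / m (jA (l', α')) :=
      div_nonneg (Real.rpow_nonneg (div_nonneg (hpos _).le (hpos _).le) _) (hpos _).le
    have hw2ann : (0:ℝ) ≤ (m (jA (l'', α'')) / m (jA p)) ^ (1 - β) / m (jA (l'', α'')) :=
      div_nonneg (Real.rpow_nonneg (div_nonneg (hpos _).le (hpos _).le) _) (hpos _).le
    have hw1bnn : (0:ℝ) ≤ (m (jA (l'', α'')) / m q) ^ (1 - β) / m (jA (l'', α'')) :=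
      div_nonneg (Real.rpow_nonneg (div_nonneg (hpos _).le (hpos _).le) _) (hpos _).le
    have hw2bnn : (0:ℝ) ≤ (m (jA (l', α')) / m (jA p)) ^ (1 - β) / m (jA (l', α')) :=
      div_nonneg (Real.rpow_nonneg (div_nonneg (hpos _).le (hpos _).le) _) (hpos _).le
    -- generic real assembly
    have realgen : ∀ w1 w2 : ℝ,
        mProd m ((hSupp p.1 p.2).erase (jA p)) ^ (-β) * (m q)⁻¹ ≤
          m (jA p) * (w1 * (w2 *
            (mProd m ((hSupp l' α').erase (jA (l', α'))) ^ (-β) *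
             mProd m ((hSupp l'' α'').erase (jA (l'', α''))) ^ (-β)))) →
        mProd m ((hSupp p.1 p.2).erase (jA p)) ^ (-β) * (m q)⁻¹ *
          ((((l' q).natAbs : ℝ) * ((α'' q : ℕ) : ℝ))) *
          (norm : ℂ → ℝ) (h l' α') * (norm : ℂ → ℝ) (g l'' α'') *
          (ρ - r) ^ a1 p.2 * Real.exp ((σ - s) * (l1 p.1 : ℝ)) ≤
        m (jA p) * (w1 * w2 *
          ((((l' q).natAbs : ℝ) * Real.exp (-(s * (l1 l' : ℝ)))) *
           (mProd m ((hSupp l' α').erase (jA (l', α'))) ^ (-β) *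
              (norm : ℂ → ℝ) (h l' α') * ρ ^ a1 α' * Real.exp (σ * (l1 l' : ℝ)))) *
          ((((α'' q : ℕ) : ℝ) * (ρ - r) ^ (a1 α'' - 1) / ρs ^ (a1 α'')) *
           (mProd m ((hSupp l'' α'').erase (jA (l'', α''))) ^ (-β) *
              (norm : ℂ → ℝ) (g l'' α'') * ρs ^ a1 α'' *
              Real.exp (σs * (l1 l'' : ℝ))))) := by
      intro w1 w2 hmass
      have hmRnn := hmLnn.trans hmass
      have hstep := mul_le_mul (mul_le_mul hmass scalarI hsLnn hmRnn)
        (le_refl ((norm : ℂ → ℝ) (h l' α') * (norm : ℂ → ℝ) (g l'' α'')))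
        habsnn (mul_nonneg hmRnn hsRnn)
      calc mProd m ((hSupp p.1 p.2).erase (jA p)) ^ (-β) * (m q)⁻¹ *
            ((((l' q).natAbs : ℝ) * ((α'' q : ℕ) : ℝ))) *
            (norm : ℂ → ℝ) (h l' α') * (norm : ℂ → ℝ) (g l'' α'') *
            (ρ - r) ^ a1 p.2 * Real.exp ((σ - s) * (l1 p.1 : ℝ))
          = (mProd m ((hSupp p.1 p.2).erase (jA p)) ^ (-β) * (m q)⁻¹) *
            ((((l' q).natAbs : ℝ) * ((α'' q : ℕ) : ℝ)) * (ρ - r) ^ a1 p.2 *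
              Real.exp ((σ - s) * (l1 p.1 : ℝ))) *
            ((norm : ℂ → ℝ) (h l' α') * (norm : ℂ → ℝ) (g l'' α'')) := by ring
        _ ≤ _ := hstep
        _ = _ := by ring
    have hmax : jA p ≤ max (jA (l', α')) (jA (l'', α'')) := jA_le_max hsub hA'ne hA''ne
    rw [mul_add]
    rcases le_or_gt (jA p) (jA (l'', α'')) with hcase | hcase
    · refine le_trans ?_ le_self_add
      have massIa := key_weight (β := β) hβ0.le (hpos q) (hpos (jA p)) (hpos (jA (l', α')))
        (hpos (jA (l'', α''))) (mProd_pos hpos ((hSupp l' α').erase (jA (l', α'))))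
        (mProd_pos hpos ((hSupp l'' α'').erase (jA (l'', α''))))
        (mProd_pos hpos ((hSupp p.1 p.2).erase (jA p))) hmassle
      have hr1 := realgen ((m (jA (l', α')) / m q) ^ (1 - β) / m (jA (l', α')))
        ((m (jA (l'', α'')) / m (jA p)) ^ (1 - β) / m (jA (l'', α''))) massIa
      have hFa : ENNReal.ofReal (m (jA p)) *
          GENF m β (jA p) (ah1 m β ρ σ s h) (bg1 m β ρ ρs σs r g) (ψa p (q, l', α')) =
          ENNReal.ofReal (m (jA p) *
            ((m (jA (l', α')) / m q) ^ (1 - β) / m (jA (l', α')) *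
             ((m (jA (l'', α'')) / m (jA p)) ^ (1 - β) / m (jA (l'', α''))) *
             ((((l' q).natAbs : ℝ) * Real.exp (-(s * (l1 l' : ℝ)))) *
              (mProd m ((hSupp l' α').erase (jA (l', α'))) ^ (-β) *
                (norm : ℂ → ℝ) (h l' α') * ρ ^ a1 α' * Real.exp (σ * (l1 l' : ℝ)))) *
             ((((α'' q : ℕ) : ℝ) * (ρ - r) ^ (a1 α'' - 1) / ρs ^ (a1 α'')) *
              (mProd m ((hSupp l'' α'').erase (jA (l'', α''))) ^ (-β) *
                (norm : ℂ → ℝ) (g l'' α'') * ρs ^ a1 α'' *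
                Real.exp (σs * (l1 l'' : ℝ)))))) := by
        simp only [GENF, ψa, ah1, bg1, bw]
        simp only [← hl'', ← hα'']
        simp only [(show q ≤ jA (l', α') from le_jOf hq'), (show jA p ≤ jA (l'', α'') from hcase), if_true]
        rw [show hamTerm m β ρ σ h (jA (l', α')) (l', α') = _ from hamTerm_val hA'ne,
          show hamTerm m β ρs σs g (jA (l'', α'')) (l'', α'') = _ from hamTerm_val hA''ne]
        exact collapse5 (hpos _).le hw1ann hw2ann hf1hnn hHvnn hf1gnn
      rw [hFa]
      apply ENNReal.ofReal_le_ofReal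
      exact hr1.trans (le_of_eq (by ring))
    · have hj' : jA p ≤ jA (l', α') := by
        rcases max_cases (jA (l', α')) (jA (l'', α'')) with ⟨he, _⟩ | ⟨he, _⟩ <;> omega
      refine le_trans ?_ le_add_self
      have hmassle' : (m (jA (l'', α'')) * mProd m ((hSupp l'' α'').erase (jA (l'', α'')))) *
          (m (jA (l', α')) * mProd m ((hSupp l' α').erase (jA (l', α')))) ≤
          m q * (m (jA p) * mProd m ((hSupp p.1 p.2).erase (jA p))) := by
        rw [mul_comm]; exact hmassle
      have massIb := key_weight (β := β) hβ0.le (hpos q) (hpos (jA p)) (hpos (jA (l'', α'')))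
        (hpos (jA (l', α'))) (mProd_pos hpos ((hSupp l'' α'').erase (jA (l'', α''))))
        (mProd_pos hpos ((hSupp l' α').erase (jA (l', α'))))
        (mProd_pos hpos ((hSupp p.1 p.2).erase (jA p))) hmassle'
      have hr1 := realgen ((m (jA (l'', α'')) / m q) ^ (1 - β) / m (jA (l'', α'')))
        ((m (jA (l', α')) / m (jA p)) ^ (1 - β) / m (jA (l', α')))
        (massIb.trans (le_of_eq (by ring)))
      have hFb : ENNReal.ofReal (m (jA p)) *
          GENF m β (jA p) (bg1 m β ρ ρs σs r g) (ah1 m β ρ σ s h) (ψb p (q, l', α')) =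
          ENNReal.ofReal (m (jA p) *
            ((m (jA (l'', α'')) / m q) ^ (1 - β) / m (jA (l'', α'')) *
             ((m (jA (l', α')) / m (jA p)) ^ (1 - β) / m (jA (l', α'))) *
             ((((α'' q : ℕ) : ℝ) * (ρ - r) ^ (a1 α'' - 1) / ρs ^ (a1 α'')) *
              (mProd m ((hSupp l'' α'').erase (jA (l'', α''))) ^ (-β) *
                (norm : ℂ → ℝ) (g l'' α'') * ρs ^ a1 α'' *
                Real.exp (σs * (l1 l'' : ℝ)))) *
             ((((l' q).natAbs : ℝ) * Real.exp (-(s * (l1 l' : ℝ)))) *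
              (mProd m ((hSupp l' α').erase (jA (l', α'))) ^ (-β) *
                (norm : ℂ → ℝ) (h l' α') * ρ ^ a1 α' * Real.exp (σ * (l1 l' : ℝ)))))) := by
        simp only [GENF, ψb, ah1, bg1, bw]
        simp only [← hl'', ← hα'']
        simp only [(show q ≤ jA (l'', α'') from le_jOf hq''), (show jA p ≤ jA (l', α') from hj'), if_true]
        rw [show hamTerm m β ρ σ h (jA (l', α')) (l', α') = _ from hamTerm_val hA'ne,
          show hamTerm m β ρs σs g (jA (l'', α'')) (l'', α'') = _ from hamTerm_val hA''ne]
        have hGvnn : (0:ℝ) ≤ mProd m ((hSupp l'' α'').erase (jA (l'', α''))) ^ (-β) *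
            (norm : ℂ → ℝ) (g l'' α'') * ρs ^ a1 α'' * Real.exp (σs * (l1 l'' : ℝ)) :=
          mul_nonneg (mul_nonneg (mul_nonneg hW''nn (norm_nonneg _))
            (by positivity)) (Real.exp_nonneg _)
        exact collapse5 (hpos _).le hw1bnn hw2bnn hf1gnn hGvnn hf1hnn
      rw [hFb]
      apply ENNReal.ofReal_le_ofReal
      exact hr1.trans (le_of_eq (by ring))


lemma piece2 (hpos : ∀ i, 0 < m i) (hle1 : ∀ i, m i ≤ 1) (hanti : Antitone m)
    (hβ0 : 0 < β) (hβ1 : β < 1)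
    (hρ : 0 < ρ) (hρρs : ρ ≤ ρs) (hσ : 0 < σ) (hσσs : σ ≤ σs)
    (hr : 0 < r) (hrρ : r < ρ) (hs : 0 < s) (hsσ : s < σ)
    (p : Pa) (q : ℕ) (l' : ℕ →₀ ℤ) (α' : ℕ →₀ ℕ)
    (hcond : α' ≤ p.2 + Finsupp.single q 1) :
    ENNReal.ofReal (mProd m ((hSupp p.1 p.2).erase (jA p)) ^ (-β) * (m q)⁻¹ *
        ((((α' q : ℕ) : ℝ) * (((p.1 - l') q).natAbs : ℝ))) *
        (norm : ℂ → ℝ) (h l' α') *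
        (norm : ℂ → ℝ) (g (p.1 - l') (p.2 + Finsupp.single q 1 - α')) *
        (ρ - r) ^ a1 p.2 * Real.exp ((σ - s) * (l1 p.1 : ℝ)))
    ≤ ENNReal.ofReal (m (jA p)) *
        (GENF m β (jA p) (ah2 m β ρ σ r h) (bg2 m β ρs σ σs s g) (ψa p (q, l', α')) +
         GENF m β (jA p) (bg2 m β ρs σ σs s g) (ah2 m β ρ σ r h) (ψb p (q, l', α'))) := by
  set l'' : ℕ →₀ ℤ := p.1 - l' with hl''
  set α'' : ℕ →₀ ℕ := p.2 + Finsupp.single q 1 - α' with hα''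
  by_cases hk : (((α' q : ℕ) : ℝ) * ((l'' q).natAbs : ℝ)) = 0
  · simp only [← hl'', hk]
    simp
  · have hρr : 0 < ρ - r := by linarith
    have hσs' : 0 < σ - s := by linarith
    have hρs : 0 < ρs := by linarith
    have hσgap : 0 < σs - σ + s := by linarith
    obtain ⟨hk1, hk2⟩ := mul_ne_zero_iff.1 hk
    have hα'q : α' q ≠ 0 := by
      intro hz; apply hk1; rw [hz]; simp
    have hl''q : l'' q ≠ 0 := by
      intro hz; apply hk2; rw [hz]; simp
    have hq' : q ∈ hSupp l' α' := mem_hSupp.2 (Or.inr hα'q)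
    have hq'' : q ∈ hSupp l'' α'' := mem_hSupp.2 (Or.inl hl''q)
    have hA'ne : (hSupp l' α').Nonempty := ⟨q, hq'⟩
    have hA''ne : (hSupp l'' α'').Nonempty := ⟨q, hq''⟩
    have hladd : p.1 = l' + l'' := by rw [hl'']; abel
    have hαadd : p.2 + Finsupp.single q 1 = α' + α'' := by
      rw [hα'', add_tsub_cancel_of_le hcond]
    have hsub : hSupp p.1 p.2 ⊆ hSupp l' α' ∪ hSupp l'' α'' :=
      hSupp_subset hladd hαadd
    have ha1 : a1 α' + a1 α'' = a1 p.2 + 1 := by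
      rw [← a1_add, ← hαadd, a1_add, a1_single]
    have hα'pos : 1 ≤ a1 α' :=
      le_trans (Nat.one_le_iff_ne_zero.2 hα'q) (coord_le_a1 α' q)
    have hmassle : (m (jA (l', α')) * mProd m ((hSupp l' α').erase (jA (l', α')))) *
        (m (jA (l'', α'')) * mProd m ((hSupp l'' α'').erase (jA (l'', α'')))) ≤
        m q * (m (jA p) * mProd m ((hSupp p.1 p.2).erase (jA p))) := by
      rw [show m (jA (l', α')) * mProd m ((hSupp l' α').erase (jA (l', α'))) =
            mProd m (hSupp l' α') from mProd_erase_mul (jOf_mem hA'ne),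
          show m (jA (l'', α'')) * mProd m ((hSupp l'' α'').erase (jA (l'', α''))) =
            mProd m (hSupp l'' α'') from mProd_erase_mul (jOf_mem hA''ne)]
      exact mass_master hpos hle1 hanti hq' hq'' hsub
    -- scalar inequality
    have hLle : (l1 p.1 : ℝ) ≤ (l1 l' : ℝ) + (l1 l'' : ℝ) := by
      have := l1_add_le l' l''
      rw [← hladd] at this
      exact_mod_cast this
    have hexpI : Real.exp ((σ - s) * (l1 p.1 : ℝ)) ≤
        Real.exp (σ * (l1 l' : ℝ)) * Real.exp ((σ - s) * (l1 l'' : ℝ)) := by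
      rw [← Real.exp_add]
      apply Real.exp_le_exp.2
      have h1 : (0:ℝ) ≤ (l1 l' : ℝ) := Nat.cast_nonneg _
      nlinarith
    have hpowI : (ρ - r) ^ a1 p.2 ≤ (ρ - r) ^ (a1 α' - 1) * ρs ^ a1 α'' := by
      have hsplit : a1 p.2 = (a1 α' - 1) + a1 α'' := by omega
      rw [hsplit, pow_add]
      apply mul_le_mul_of_nonneg_left _ (by positivity)
      exact pow_le_pow_left₀ hρr.le (by linarith) _
    have scalarI : (((α' q : ℕ) : ℝ) * ((l'' q).natAbs : ℝ)) * (ρ - r) ^ a1 p.2 *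
        Real.exp ((σ - s) * (l1 p.1 : ℝ)) ≤
        (((α' q : ℕ) : ℝ) * (ρ - r) ^ (a1 α' - 1) / ρ ^ (a1 α')) *
          (ρ ^ a1 α' * Real.exp (σ * (l1 l' : ℝ))) *
          ((((l'' q).natAbs : ℝ) * Real.exp (-((σs - σ + s) * (l1 l'' : ℝ)))) *
            (ρs ^ a1 α'' * Real.exp (σs * (l1 l'' : ℝ)))) := by
      have step : (((α' q : ℕ) : ℝ) * ((l'' q).natAbs : ℝ)) * (ρ - r) ^ a1 p.2 *
          Real.exp ((σ - s) * (l1 p.1 : ℝ)) ≤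
          (((α' q : ℕ) : ℝ) * ((l'' q).natAbs : ℝ)) *
            ((ρ - r) ^ (a1 α' - 1) * ρs ^ a1 α'') *
            (Real.exp (σ * (l1 l' : ℝ)) * Real.exp ((σ - s) * (l1 l'' : ℝ))) := by
        apply mul_le_mul (mul_le_mul_of_nonneg_left hpowI (by positivity)) hexpI
          (Real.exp_nonneg _) (by positivity)
      refine le_trans step (le_of_eq ?_)
      have hee : Real.exp ((σ - s) * (l1 l'' : ℝ)) =
          Real.exp (-((σs - σ + s) * (l1 l'' : ℝ))) * Real.exp (σs * (l1 l'' : ℝ)) := by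
        rw [← Real.exp_add]
        congr 1
        ring
      rw [hee]
      field_simp
    -- nonnegativity facts
    have hW'nn : (0:ℝ) ≤ mProd m ((hSupp l' α').erase (jA (l', α'))) ^ (-β) :=
      Real.rpow_nonneg (mProd_pos hpos _).le _
    have hW''nn : (0:ℝ) ≤ mProd m ((hSupp l'' α'').erase (jA (l'', α''))) ^ (-β) :=
      Real.rpow_nonneg (mProd_pos hpos _).le _
    have hWnn : (0:ℝ) ≤ mProd m ((hSupp p.1 p.2).erase (jA p)) ^ (-β) :=
      Real.rpow_nonneg (mProd_pos hpos _).le _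
    have habsnn : (0:ℝ) ≤ (norm : ℂ → ℝ) (h l' α') * (norm : ℂ → ℝ) (g l'' α'') :=
      mul_nonneg (norm_nonneg _) (norm_nonneg _)
    have hsLnn : (0:ℝ) ≤ (((α' q : ℕ) : ℝ) * ((l'' q).natAbs : ℝ)) * (ρ - r) ^ a1 p.2 *
        Real.exp ((σ - s) * (l1 p.1 : ℝ)) :=
      mul_nonneg (mul_nonneg (by positivity) (pow_nonneg hρr.le _)) (Real.exp_nonneg _)
    have hsRnn : (0:ℝ) ≤ (((α' q : ℕ) : ℝ) * (ρ - r) ^ (a1 α' - 1) / ρ ^ (a1 α')) *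
          (ρ ^ a1 α' * Real.exp (σ * (l1 l' : ℝ))) *
          ((((l'' q).natAbs : ℝ) * Real.exp (-((σs - σ + s) * (l1 l'' : ℝ)))) *
            (ρs ^ a1 α'' * Real.exp (σs * (l1 l'' : ℝ)))) := hsLnn.trans scalarI
    have hmLnn : (0:ℝ) ≤ mProd m ((hSupp p.1 p.2).erase (jA p)) ^ (-β) * (m q)⁻¹ :=
      mul_nonneg hWnn (inv_nonneg.2 (hpos q).le)
    have hf2hnn : (0:ℝ) ≤ ((α' q : ℕ) : ℝ) * (ρ - r) ^ (a1 α' - 1) / ρ ^ (a1 α') :=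
      div_nonneg (mul_nonneg (Nat.cast_nonneg _) (pow_nonneg hρr.le _)) (pow_nonneg hρ.le _)
    have hf2gnn : (0:ℝ) ≤ ((l'' q).natAbs : ℝ) * Real.exp (-((σs - σ + s) * (l1 l'' : ℝ))) := by
      positivity
    have hHvnn : (0:ℝ) ≤ mProd m ((hSupp l' α').erase (jA (l', α'))) ^ (-β) *
        (norm : ℂ → ℝ) (h l' α') * ρ ^ a1 α' * Real.exp (σ * (l1 l' : ℝ)) :=
      mul_nonneg (mul_nonneg (mul_nonneg hW'nn (norm_nonneg _))
        (by positivity)) (Real.exp_nonneg _)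
    have hGvnn : (0:ℝ) ≤ mProd m ((hSupp l'' α'').erase (jA (l'', α''))) ^ (-β) *
        (norm : ℂ → ℝ) (g l'' α'') * ρs ^ a1 α'' * Real.exp (σs * (l1 l'' : ℝ)) :=
      mul_nonneg (mul_nonneg (mul_nonneg hW''nn (norm_nonneg _))
        (by positivity)) (Real.exp_nonneg _)
    have hw1ann : (0:ℝ) ≤ (m (jA (l', α')) / m q) ^ (1 - β) / m (jA (l', α')) :=
      div_nonneg (Real.rpow_nonneg (div_nonneg (hpos _).le (hpos _).le) _) (hpos _).le
    have hw2ann : (0:ℝ) ≤ (m (jA (l'', α'')) / m (jA p)) ^ (1 - β) / m (jA (l'', α'')) :=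
      div_nonneg (Real.rpow_nonneg (div_nonneg (hpos _).le (hpos _).le) _) (hpos _).le
    have hw1bnn : (0:ℝ) ≤ (m (jA (l'', α'')) / m q) ^ (1 - β) / m (jA (l'', α'')) :=
      div_nonneg (Real.rpow_nonneg (div_nonneg (hpos _).le (hpos _).le) _) (hpos _).le
    have hw2bnn : (0:ℝ) ≤ (m (jA (l', α')) / m (jA p)) ^ (1 - β) / m (jA (l', α')) :=
      div_nonneg (Real.rpow_nonneg (div_nonneg (hpos _).le (hpos _).le) _) (hpos _).le
    -- generic real assembly
    have realgen : ∀ w1 w2 : ℝ,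
        mProd m ((hSupp p.1 p.2).erase (jA p)) ^ (-β) * (m q)⁻¹ ≤
          m (jA p) * (w1 * (w2 *
            (mProd m ((hSupp l' α').erase (jA (l', α'))) ^ (-β) *
             mProd m ((hSupp l'' α'').erase (jA (l'', α''))) ^ (-β)))) →
        mProd m ((hSupp p.1 p.2).erase (jA p)) ^ (-β) * (m q)⁻¹ *
          ((((α' q : ℕ) : ℝ) * ((l'' q).natAbs : ℝ))) *
          (norm : ℂ → ℝ) (h l' α') * (norm : ℂ → ℝ) (g l'' α'') *
          (ρ - r) ^ a1 p.2 * Real.exp ((σ - s) * (l1 p.1 : ℝ)) ≤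
        m (jA p) * (w1 * w2 *
          ((((α' q : ℕ) : ℝ) * (ρ - r) ^ (a1 α' - 1) / ρ ^ (a1 α')) *
           (mProd m ((hSupp l' α').erase (jA (l', α'))) ^ (-β) *
              (norm : ℂ → ℝ) (h l' α') * ρ ^ a1 α' * Real.exp (σ * (l1 l' : ℝ)))) *
          ((((l'' q).natAbs : ℝ) * Real.exp (-((σs - σ + s) * (l1 l'' : ℝ)))) *
           (mProd m ((hSupp l'' α'').erase (jA (l'', α''))) ^ (-β) *
              (norm : ℂ → ℝ) (g l'' α'') * ρs ^ a1 α'' *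
              Real.exp (σs * (l1 l'' : ℝ))))) := by
      intro w1 w2 hmass
      have hmRnn := hmLnn.trans hmass
      have hstep := mul_le_mul (mul_le_mul hmass scalarI hsLnn hmRnn)
        (le_refl ((norm : ℂ → ℝ) (h l' α') * (norm : ℂ → ℝ) (g l'' α'')))
        habsnn (mul_nonneg hmRnn hsRnn)
      calc mProd m ((hSupp p.1 p.2).erase (jA p)) ^ (-β) * (m q)⁻¹ *
            ((((α' q : ℕ) : ℝ) * ((l'' q).natAbs : ℝ))) *
            (norm : ℂ → ℝ) (h l' α') * (norm : ℂ → ℝ) (g l'' α'') *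
            (ρ - r) ^ a1 p.2 * Real.exp ((σ - s) * (l1 p.1 : ℝ))
          = (mProd m ((hSupp p.1 p.2).erase (jA p)) ^ (-β) * (m q)⁻¹) *
            ((((α' q : ℕ) : ℝ) * ((l'' q).natAbs : ℝ)) * (ρ - r) ^ a1 p.2 *
              Real.exp ((σ - s) * (l1 p.1 : ℝ))) *
            ((norm : ℂ → ℝ) (h l' α') * (norm : ℂ → ℝ) (g l'' α'')) := by ring
        _ ≤ _ := hstep
        _ = _ := by ring
    have hmax : jA p ≤ max (jA (l', α')) (jA (l'', α'')) := jA_le_max hsub hA'ne hA''ne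
    rw [mul_add]
    rcases le_or_gt (jA p) (jA (l'', α'')) with hcase | hcase
    · refine le_trans ?_ le_self_add
      have massIa := key_weight (β := β) hβ0.le (hpos q) (hpos (jA p)) (hpos (jA (l', α')))
        (hpos (jA (l'', α''))) (mProd_pos hpos ((hSupp l' α').erase (jA (l', α'))))
        (mProd_pos hpos ((hSupp l'' α'').erase (jA (l'', α''))))
        (mProd_pos hpos ((hSupp p.1 p.2).erase (jA p))) hmassle
      have hr1 := realgen ((m (jA (l', α')) / m q) ^ (1 - β) / m (jA (l', α')))
        ((m (jA (l'', α'')) / m (jA p)) ^ (1 - β) / m (jA (l'', α''))) massIa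
      have hFa : ENNReal.ofReal (m (jA p)) *
          GENF m β (jA p) (ah2 m β ρ σ r h) (bg2 m β ρs σ σs s g) (ψa p (q, l', α')) =
          ENNReal.ofReal (m (jA p) *
            ((m (jA (l', α')) / m q) ^ (1 - β) / m (jA (l', α')) *
             ((m (jA (l'', α'')) / m (jA p)) ^ (1 - β) / m (jA (l'', α''))) *
             ((((α' q : ℕ) : ℝ) * (ρ - r) ^ (a1 α' - 1) / ρ ^ (a1 α')) *
              (mProd m ((hSupp l' α').erase (jA (l', α'))) ^ (-β) *
                (norm : ℂ → ℝ) (h l' α') * ρ ^ a1 α' * Real.exp (σ * (l1 l' : ℝ)))) *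
             ((((l'' q).natAbs : ℝ) * Real.exp (-((σs - σ + s) * (l1 l'' : ℝ)))) *
              (mProd m ((hSupp l'' α'').erase (jA (l'', α''))) ^ (-β) *
                (norm : ℂ → ℝ) (g l'' α'') * ρs ^ a1 α'' *
                Real.exp (σs * (l1 l'' : ℝ)))))) := by
        simp only [GENF, ψa, ah2, bg2, bw]
        simp only [← hl'', ← hα'']
        simp only [(show q ≤ jA (l', α') from le_jOf hq'), (show jA p ≤ jA (l'', α'') from hcase), if_true]
        rw [show hamTerm m β ρ σ h (jA (l', α')) (l', α') = _ from hamTerm_val hA'ne,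
          show hamTerm m β ρs σs g (jA (l'', α'')) (l'', α'') = _ from hamTerm_val hA''ne]
        exact collapse5 (hpos _).le hw1ann hw2ann hf2hnn hHvnn hf2gnn
      rw [hFa]
      apply ENNReal.ofReal_le_ofReal
      exact hr1.trans (le_of_eq (by ring))
    · have hj' : jA p ≤ jA (l', α') := by
        rcases max_cases (jA (l', α')) (jA (l'', α'')) with ⟨he, _⟩ | ⟨he, _⟩ <;> omega
      refine le_trans ?_ le_add_self
      have hmassle' : (m (jA (l'', α'')) * mProd m ((hSupp l'' α'').erase (jA (l'', α'')))) *
          (m (jA (l', α')) * mProd m ((hSupp l' α').erase (jA (l', α')))) ≤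
          m q * (m (jA p) * mProd m ((hSupp p.1 p.2).erase (jA p))) := by
        rw [mul_comm]; exact hmassle
      have massIb := key_weight (β := β) hβ0.le (hpos q) (hpos (jA p)) (hpos (jA (l'', α'')))
        (hpos (jA (l', α'))) (mProd_pos hpos ((hSupp l'' α'').erase (jA (l'', α''))))
        (mProd_pos hpos ((hSupp l' α').erase (jA (l', α'))))
        (mProd_pos hpos ((hSupp p.1 p.2).erase (jA p))) hmassle'
      have hr1 := realgen ((m (jA (l'', α'')) / m q) ^ (1 - β) / m (jA (l'', α'')))
        ((m (jA (l', α')) / m (jA p)) ^ (1 - β) / m (jA (l', α')))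
        (massIb.trans (le_of_eq (by ring)))
      have hFb : ENNReal.ofReal (m (jA p)) *
          GENF m β (jA p) (bg2 m β ρs σ σs s g) (ah2 m β ρ σ r h) (ψb p (q, l', α')) =
          ENNReal.ofReal (m (jA p) *
            ((m (jA (l'', α'')) / m q) ^ (1 - β) / m (jA (l'', α'')) *
             ((m (jA (l', α')) / m (jA p)) ^ (1 - β) / m (jA (l', α'))) *
             ((((l'' q).natAbs : ℝ) * Real.exp (-((σs - σ + s) * (l1 l'' : ℝ)))) *
              (mProd m ((hSupp l'' α'').erase (jA (l'', α''))) ^ (-β) *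
                (norm : ℂ → ℝ) (g l'' α'') * ρs ^ a1 α'' *
                Real.exp (σs * (l1 l'' : ℝ)))) *
             ((((α' q : ℕ) : ℝ) * (ρ - r) ^ (a1 α' - 1) / ρ ^ (a1 α')) *
              (mProd m ((hSupp l' α').erase (jA (l', α'))) ^ (-β) *
                (norm : ℂ → ℝ) (h l' α') * ρ ^ a1 α' * Real.exp (σ * (l1 l' : ℝ)))))) := by
        simp only [GENF, ψb, ah2, bg2, bw]
        simp only [← hl'', ← hα'']
        simp only [(show q ≤ jA (l'', α'') from le_jOf hq''), (show jA p ≤ jA (l', α') from hj'), if_true]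
        rw [show hamTerm m β ρ σ h (jA (l', α')) (l', α') = _ from hamTerm_val hA'ne,
          show hamTerm m β ρs σs g (jA (l'', α'')) (l'', α'') = _ from hamTerm_val hA''ne]
        exact collapse5 (hpos _).le hw1bnn hw2bnn hf2gnn hGvnn hf2hnn
      rw [hFb]
      apply ENNReal.ofReal_le_ofReal
      exact hr1.trans (le_of_eq (by ring))

lemma key (hpos : ∀ i, 0 < m i) (hle1 : ∀ i, m i ≤ 1) (hanti : Antitone m)
    (hβ0 : 0 < β) (hβ1 : β < 1)
    (hρ : 0 < ρ) (hρρs : ρ ≤ ρs) (hσ : 0 < σ) (hσσs : σ ≤ σs)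
    (hr : 0 < r) (hrρ : r < ρ) (hs : 0 < s) (hsσ : s < σ)
    (p : Pa) (x : XX) :
    ENNReal.ofReal (mProd m ((hSupp p.1 p.2).erase (jA p)) ^ (-β) *
        (norm : ℂ → ℝ) (bracketTerm m h g p.1 p.2 x) * (ρ - r) ^ a1 p.2 *
        Real.exp ((σ - s) * (l1 p.1 : ℝ)))
    ≤ ENNReal.ofReal (m (jA p)) *
        (GENF m β (jA p) (ah1 m β ρ σ s h) (bg1 m β ρ ρs σs r g) (ψa p x) +
         GENF m β (jA p) (bg1 m β ρ ρs σs r g) (ah1 m β ρ σ s h) (ψb p x) +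
         GENF m β (jA p) (ah2 m β ρ σ r h) (bg2 m β ρs σ σs s g) (ψa p x) +
         GENF m β (jA p) (bg2 m β ρs σ σs s g) (ah2 m β ρ σ r h) (ψb p x)) := by
  obtain ⟨q, l', α'⟩ := x
  have hρr : 0 < ρ - r := by linarith
  by_cases hcond : α' ≤ p.2 + Finsupp.single q 1
  · -- bound the absolute value of the bracket term
    have hWnn : (0:ℝ) ≤ mProd m ((hSupp p.1 p.2).erase (jA p)) ^ (-β) :=
      Real.rpow_nonneg (mProd_pos hpos _).le _
    have habs : (norm : ℂ → ℝ) (bracketTerm m h g p.1 p.2 (q, l', α')) ≤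
        (m q)⁻¹ *
          (((((l' q).natAbs : ℝ) *
              (((p.2 + Finsupp.single q 1 - α' : ℕ →₀ ℕ) q : ℕ) : ℝ))) +
           ((((α' q : ℕ) : ℝ) * (((p.1 - l') q).natAbs : ℝ)))) *
          ((norm : ℂ → ℝ) (h l' α') *
            (norm : ℂ → ℝ) (g (p.1 - l') (p.2 + Finsupp.single q 1 - α'))) := by
      simp only [bracketTerm]
      rw [if_pos hcond]
      rw [norm_mul, norm_mul, norm_mul]
      rw [norm_inv]
      have h1 : (norm : ℂ → ℝ) ((m q : ℂ)) = m q := by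
        rw [Complex.norm_real, Real.norm_of_nonneg (hpos q).le]
      rw [h1]
      have htri : (norm : ℂ → ℝ) ((l' q : ℂ) *
            (((p.2 + Finsupp.single q 1 - α' : ℕ →₀ ℕ) q : ℕ) : ℂ) -
            ((α' q : ℕ) : ℂ) * (((p.1 - l') q : ℤ) : ℂ)) ≤
          (((l' q).natAbs : ℝ) *
            (((p.2 + Finsupp.single q 1 - α' : ℕ →₀ ℕ) q : ℕ) : ℝ)) +
          (((α' q : ℕ) : ℝ) * (((p.1 - l') q).natAbs : ℝ)) := by
        refine le_trans (norm_sub_le _ _) (le_of_eq ?_)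
        rw [norm_mul, norm_mul]
        rw [Complex.norm_intCast, Complex.norm_natCast, Complex.norm_natCast,
          Complex.norm_intCast]
        rw [Nat.cast_natAbs, Nat.cast_natAbs]
        push_cast
        ring
      calc (m q)⁻¹ * (norm : ℂ → ℝ) ((l' q : ℂ) *
              (((p.2 + Finsupp.single q 1 - α' : ℕ →₀ ℕ) q : ℕ) : ℂ) -
              ((α' q : ℕ) : ℂ) * (((p.1 - l') q : ℤ) : ℂ)) *
            (norm : ℂ → ℝ) (h l' α') *
            (norm : ℂ → ℝ) (g (p.1 - l') (p.2 + Finsupp.single q 1 - α'))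
          = ((m q)⁻¹ * (norm : ℂ → ℝ) ((l' q : ℂ) *
              (((p.2 + Finsupp.single q 1 - α' : ℕ →₀ ℕ) q : ℕ) : ℂ) -
              ((α' q : ℕ) : ℂ) * (((p.1 - l') q : ℤ) : ℂ))) *
            ((norm : ℂ → ℝ) (h l' α') *
              (norm : ℂ → ℝ) (g (p.1 - l') (p.2 + Finsupp.single q 1 - α'))) := by ring
        _ ≤ ((m q)⁻¹ *
            (((((l' q).natAbs : ℝ) *
                (((p.2 + Finsupp.single q 1 - α' : ℕ →₀ ℕ) q : ℕ) : ℝ))) +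
             ((((α' q : ℕ) : ℝ) * (((p.1 - l') q).natAbs : ℝ))))) *
            ((norm : ℂ → ℝ) (h l' α') *
              (norm : ℂ → ℝ) (g (p.1 - l') (p.2 + Finsupp.single q 1 - α'))) := by
            apply mul_le_mul_of_nonneg_right
              (mul_le_mul_of_nonneg_left htri (inv_nonneg.2 (hpos q).le))
              (mul_nonneg (norm_nonneg _) (norm_nonneg _))
    -- combine
    have hP : (0:ℝ) ≤ (ρ - r) ^ a1 p.2 := pow_nonneg hρr.le _
    have hE : (0:ℝ) ≤ Real.exp ((σ - s) * (l1 p.1 : ℝ)) := Real.exp_nonneg _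
    have hT1nn : (0:ℝ) ≤ mProd m ((hSupp p.1 p.2).erase (jA p)) ^ (-β) * (m q)⁻¹ *
        ((((l' q).natAbs : ℝ) *
          (((p.2 + Finsupp.single q 1 - α' : ℕ →₀ ℕ) q : ℕ) : ℝ))) *
        (norm : ℂ → ℝ) (h l' α') *
        (norm : ℂ → ℝ) (g (p.1 - l') (p.2 + Finsupp.single q 1 - α')) *
        (ρ - r) ^ a1 p.2 * Real.exp ((σ - s) * (l1 p.1 : ℝ)) := by
      have : (0:ℝ) ≤ (m q)⁻¹ := inv_nonneg.2 (hpos q).le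
      apply mul_nonneg (mul_nonneg (mul_nonneg (mul_nonneg (mul_nonneg
        (mul_nonneg hWnn this) (by positivity)) (norm_nonneg _))
        (norm_nonneg _)) hP) hE
    have hT2nn : (0:ℝ) ≤ mProd m ((hSupp p.1 p.2).erase (jA p)) ^ (-β) * (m q)⁻¹ *
        ((((α' q : ℕ) : ℝ) * (((p.1 - l') q).natAbs : ℝ))) *
        (norm : ℂ → ℝ) (h l' α') *
        (norm : ℂ → ℝ) (g (p.1 - l') (p.2 + Finsupp.single q 1 - α')) *
        (ρ - r) ^ a1 p.2 * Real.exp ((σ - s) * (l1 p.1 : ℝ)) := by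
      have : (0:ℝ) ≤ (m q)⁻¹ := inv_nonneg.2 (hpos q).le
      apply mul_nonneg (mul_nonneg (mul_nonneg (mul_nonneg (mul_nonneg
        (mul_nonneg hWnn this) (by positivity)) (norm_nonneg _))
        (norm_nonneg _)) hP) hE
    have hstep1 : ENNReal.ofReal (mProd m ((hSupp p.1 p.2).erase (jA p)) ^ (-β) *
        (norm : ℂ → ℝ) (bracketTerm m h g p.1 p.2 (q, l', α')) * (ρ - r) ^ a1 p.2 *
        Real.exp ((σ - s) * (l1 p.1 : ℝ))) ≤
        ENNReal.ofReal (mProd m ((hSupp p.1 p.2).erase (jA p)) ^ (-β) * (m q)⁻¹ *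
          ((((l' q).natAbs : ℝ) *
            (((p.2 + Finsupp.single q 1 - α' : ℕ →₀ ℕ) q : ℕ) : ℝ))) *
          (norm : ℂ → ℝ) (h l' α') *
          (norm : ℂ → ℝ) (g (p.1 - l') (p.2 + Finsupp.single q 1 - α')) *
          (ρ - r) ^ a1 p.2 * Real.exp ((σ - s) * (l1 p.1 : ℝ)) +
          mProd m ((hSupp p.1 p.2).erase (jA p)) ^ (-β) * (m q)⁻¹ *
          ((((α' q : ℕ) : ℝ) * (((p.1 - l') q).natAbs : ℝ))) *
          (norm : ℂ → ℝ) (h l' α') *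
          (norm : ℂ → ℝ) (g (p.1 - l') (p.2 + Finsupp.single q 1 - α')) *
          (ρ - r) ^ a1 p.2 * Real.exp ((σ - s) * (l1 p.1 : ℝ))) := by
      apply ENNReal.ofReal_le_ofReal
      have hchain : mProd m ((hSupp p.1 p.2).erase (jA p)) ^ (-β) *
          (norm : ℂ → ℝ) (bracketTerm m h g p.1 p.2 (q, l', α')) * (ρ - r) ^ a1 p.2 *
          Real.exp ((σ - s) * (l1 p.1 : ℝ)) ≤
          mProd m ((hSupp p.1 p.2).erase (jA p)) ^ (-β) *
          ((m q)⁻¹ *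
            (((((l' q).natAbs : ℝ) *
                (((p.2 + Finsupp.single q 1 - α' : ℕ →₀ ℕ) q : ℕ) : ℝ))) +
             ((((α' q : ℕ) : ℝ) * (((p.1 - l') q).natAbs : ℝ)))) *
            ((norm : ℂ → ℝ) (h l' α') *
              (norm : ℂ → ℝ) (g (p.1 - l') (p.2 + Finsupp.single q 1 - α')))) *
          (ρ - r) ^ a1 p.2 * Real.exp ((σ - s) * (l1 p.1 : ℝ)) := by
        apply mul_le_mul_of_nonneg_right _ hE
        apply mul_le_mul_of_nonneg_right _ hP
        exact mul_le_mul_of_nonneg_left habs hWnn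
      exact hchain.trans (le_of_eq (by ring))
    rw [ENNReal.ofReal_add hT1nn hT2nn] at hstep1
    refine hstep1.trans ?_
    have hp1 := piece1 (h := h) (g := g) hpos hle1 hanti hβ0 hβ1 hρ hρρs hσ hσσs
      hr hrρ hs hsσ p q l' α' hcond
    have hp2 := piece2 (h := h) (g := g) hpos hle1 hanti hβ0 hβ1 hρ hρρs hσ hσσs
      hr hrρ hs hsσ p q l' α' hcond
    refine le_trans (add_le_add hp1 hp2) (le_of_eq ?_)
    rw [← mul_add]
    congr 1
    ring
  · unfold bracketTerm
    rw [if_neg hcond]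
    simp

end Piece

end BrE

namespace BrE

section Assembly

variable {m : ℕ → ℝ} {β ρ ρs σ σs r s : ℝ} {h g : FormalHam}

lemma psia_inj_good (p₁ p₂ : Pa) (x₁ x₂ : XX)
    (h₁ : x₁.2.2 ≤ p₁.2 + Finsupp.single x₁.1 1)
    (h₂ : x₂.2.2 ≤ p₂.2 + Finsupp.single x₂.1 1)
    (heq : ψa p₁ x₁ = ψa p₂ x₂) : p₁ = p₂ ∧ x₁ = x₂ := by
  obtain ⟨q₁, l₁, α₁⟩ := x₁
  obtain ⟨q₂, l₂, α₂⟩ := x₂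
  simp only [ψa, Prod.mk.injEq] at heq
  obtain ⟨hq, ⟨hl, hα⟩, hl'', hα''⟩ := heq
  subst hq; subst hl; subst hα
  have hp1 : p₁.1 = p₂.1 := by
    have := congrArg (fun v => v + l₁) hl''
    simpa using this
  have hp2 : p₁.2 = p₂.2 := by
    have h3 : p₁.2 + Finsupp.single q₁ 1 = p₂.2 + Finsupp.single q₁ 1 := by
      rw [← add_tsub_cancel_of_le h₁, ← add_tsub_cancel_of_le h₂, hα'']
    exact add_right_cancel h3
  exact ⟨Prod.ext hp1 hp2, rfl⟩

lemma psib_inj_good (p₁ p₂ : Pa) (x₁ x₂ : XX)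
    (h₁ : x₁.2.2 ≤ p₁.2 + Finsupp.single x₁.1 1)
    (h₂ : x₂.2.2 ≤ p₂.2 + Finsupp.single x₂.1 1)
    (heq : ψb p₁ x₁ = ψb p₂ x₂) : p₁ = p₂ ∧ x₁ = x₂ := by
  obtain ⟨q₁, l₁, α₁⟩ := x₁
  obtain ⟨q₂, l₂, α₂⟩ := x₂
  simp only [ψb, Prod.mk.injEq] at heq
  obtain ⟨hq, ⟨hl'', hα''⟩, hl, hα⟩ := heq
  subst hq; subst hl; subst hα
  have hp1 : p₁.1 = p₂.1 := by
    have := congrArg (fun v => v + l₁) hl''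
    simpa using this
  have hp2 : p₁.2 = p₂.2 := by
    have h3 : p₁.2 + Finsupp.single q₁ 1 = p₂.2 + Finsupp.single q₁ 1 := by
      rw [← add_tsub_cancel_of_le h₁, ← add_tsub_cancel_of_le h₂, hα'']
    exact add_right_cancel h3
  exact ⟨Prod.ext hp1 hp2, rfl⟩

/-- Sum of an `if good` composition with `ψ` is at most the full sum. -/
lemma tsum_ifG_le (F : ℕ × Pa × Pa → ℝ≥0∞) (ψ : Pa → XX → ℕ × Pa × Pa)
    (hinj : ∀ p₁ p₂ : Pa, ∀ x₁ x₂ : XX,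
      x₁.2.2 ≤ p₁.2 + Finsupp.single x₁.1 1 →
      x₂.2.2 ≤ p₂.2 + Finsupp.single x₂.1 1 →
      ψ p₁ x₁ = ψ p₂ x₂ → p₁ = p₂ ∧ x₁ = x₂) :
    ∑' z : Pa × XX,
      (if z.2.2.2 ≤ z.1.2 + Finsupp.single z.2.1 1 then F (ψ z.1 z.2) else 0) ≤
    ∑' y : ℕ × Pa × Pa, F y := by
  set s : Set (Pa × XX) := {z | z.2.2.2 ≤ z.1.2 + Finsupp.single z.2.1 1} with hs
  have hsupp : Function.support (fun z : Pa × XX =>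
      (if z.2.2.2 ≤ z.1.2 + Finsupp.single z.2.1 1 then F (ψ z.1 z.2) else 0)) ⊆ s := by
    intro z hz
    simp only [Function.mem_support] at hz
    by_cases hc : z.2.2.2 ≤ z.1.2 + Finsupp.single z.2.1 1
    · exact hc
    · simp [hc] at hz
  rw [← tsum_subtype_eq_of_support_subset hsupp]
  have heq : ∀ z : s, (if (z : Pa × XX).2.2.2 ≤ (z : Pa × XX).1.2 +
      Finsupp.single (z : Pa × XX).2.1 1 then F (ψ (z : Pa × XX).1 (z : Pa × XX).2) else 0) =
      F (ψ (z : Pa × XX).1 (z : Pa × XX).2) := fun z => if_pos z.2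
  rw [tsum_congr heq]
  apply ENNReal.tsum_comp_le_tsum_of_injective
  intro z₁ z₂ hz
  obtain ⟨hp, hx⟩ := hinj _ _ _ _ z₁.2 z₂.2 hz
  exact Subtype.ext (Prod.ext hp hx)

end Assembly

end BrE

namespace BrE

section FourSum

variable {m : ℕ → ℝ} {β ρ ρs σ σs r s S : ℝ} {h g : FormalHam}

lemma four_sum (hpos : ∀ i, 0 < m i)
    (hρ : 0 < ρ) (hρρs : ρ ≤ ρs) (hσ : 0 < σ) (hσσs : σ ≤ σs)
    (hr : 0 < r) (hrρ : r < ρ) (hs : 0 < s) (hsσ : s < σ)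
    (hS : ∀ q₀ : ℕ, ∑' n : ℕ, ENNReal.ofReal ((m (q₀ + n) / m q₀) ^ (1 - β)) ≤
      ENNReal.ofReal S)
    (j : ℕ) :
    (∑' y : ℕ × Pa × Pa, GENF m β j (ah1 m β ρ σ s h) (bg1 m β ρ ρs σs r g) y) +
    (∑' y : ℕ × Pa × Pa, GENF m β j (bg1 m β ρ ρs σs r g) (ah1 m β ρ σ s h) y) +
    (∑' y : ℕ × Pa × Pa, GENF m β j (ah2 m β ρ σ r h) (bg2 m β ρs σ σs s g) y) +
    (∑' y : ℕ × Pa × Pa, GENF m β j (bg2 m β ρs σ σs s g) (ah2 m β ρ σ r h) y) ≤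
    ENNReal.ofReal (4 * max (1 / (r * (σs - σ + s))) (1 / (s * (ρs - ρ + r)))) *
      (ENNReal.ofReal S * ENNReal.ofReal S *
        (hamNorm m β ρ σ h * hamNorm m β ρs σs g)) := by
  have hρr : 0 < ρ - r := by linarith
  have hρgap : 0 < ρs - ρ + r := by linarith
  have hσgap : 0 < σs - σ + s := by linarith
  have hρrρs : ρ - r < ρs := by linarith
  set Nh := hamNorm m β ρ σ h with hNh
  set Ng := hamNorm m β ρs σs g with hNg
  set SS := ENNReal.ofReal S with hSS
  -- payment facts
  have ha1h : ∀ q p, ah1 m β ρ σ s h q p ≤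
      ENNReal.ofReal (1/s) * hamTerm m β ρ σ h (jA p) p := by
    intro q p
    unfold ah1
    exact mul_le_mul_left (ENNReal.ofReal_le_ofReal (fl_le hs q p)) _
  have hb1g : ∀ p, (∑' q : ℕ, bg1 m β ρ ρs σs r g q p) ≤
      ENNReal.ofReal (1/(ρs - ρ + r)) * hamTerm m β ρs σs g (jA p) p := by
    intro p
    unfold bg1
    rw [ENNReal.tsum_mul_right]
    apply mul_le_mul_left
    have := tsum_fα hρr.le hρrρs p
    rw [show ρs - (ρ - r) = ρs - ρ + r by ring] at this
    exact this
  have ha1g : ∀ q p, bg1 m β ρ ρs σs r g q p ≤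
      ENNReal.ofReal (1/(ρs - ρ + r)) * hamTerm m β ρs σs g (jA p) p := by
    intro q p
    unfold bg1
    apply mul_le_mul_left
    apply ENNReal.ofReal_le_ofReal
    have := fα_le hρr.le hρrρs q p
    rw [show ρs - (ρ - r) = ρs - ρ + r by ring] at this
    exact this
  have hb1h : ∀ p, (∑' q : ℕ, ah1 m β ρ σ s h q p) ≤
      ENNReal.ofReal (1/s) * hamTerm m β ρ σ h (jA p) p := by
    intro p
    unfold ah1
    rw [ENNReal.tsum_mul_right]
    exact mul_le_mul_left (tsum_fl hs p) _
  have ha2h : ∀ q p, ah2 m β ρ σ r h q p ≤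
      ENNReal.ofReal (1/r) * hamTerm m β ρ σ h (jA p) p := by
    intro q p
    unfold ah2
    apply mul_le_mul_left
    apply ENNReal.ofReal_le_ofReal
    have := fα_le hρr.le (show ρ - r < ρ by linarith) q p
    rw [show ρ - (ρ - r) = r by ring] at this
    exact this
  have hb2g : ∀ p, (∑' q : ℕ, bg2 m β ρs σ σs s g q p) ≤
      ENNReal.ofReal (1/(σs - σ + s)) * hamTerm m β ρs σs g (jA p) p := by
    intro p
    unfold bg2
    rw [ENNReal.tsum_mul_right]
    exact mul_le_mul_left (tsum_fl hσgap p) _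
  have ha2g : ∀ q p, bg2 m β ρs σ σs s g q p ≤
      ENNReal.ofReal (1/(σs - σ + s)) * hamTerm m β ρs σs g (jA p) p := by
    intro q p
    unfold bg2
    exact mul_le_mul_left (ENNReal.ofReal_le_ofReal (fl_le hσgap q p)) _
  have hb2h : ∀ p, (∑' q : ℕ, ah2 m β ρ σ r h q p) ≤
      ENNReal.ofReal (1/r) * hamTerm m β ρ σ h (jA p) p := by
    intro p
    unfold ah2
    rw [ENNReal.tsum_mul_right]
    apply mul_le_mul_left
    have := tsum_fα hρr.le (show ρ - r < ρ by linarith) p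
    rw [show ρ - (ρ - r) = r by ring] at this
    exact this
  have hTh := fun j₀ => tsum_hamTerm_le (β := β) (ρ := ρ) (σ := σ) hpos h j₀
  have hTg := fun j₀ => tsum_hamTerm_le (β := β) (ρ := ρs) (σ := σs) hpos g j₀
  -- the four GEN applications
  have h1a := GEN hpos hS j (hamTerm m β ρ σ h) (hamTerm m β ρs σs g) Nh Ng
    (ENNReal.ofReal (1/s)) (ENNReal.ofReal (1/(ρs - ρ + r))) hTh hTg
    (ah1 m β ρ σ s h) (bg1 m β ρ ρs σs r g) ha1h hb1g
  have h1b := GEN hpos hS j (hamTerm m β ρs σs g) (hamTerm m β ρ σ h) Ng Nh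
    (ENNReal.ofReal (1/(ρs - ρ + r))) (ENNReal.ofReal (1/s)) hTg hTh
    (bg1 m β ρ ρs σs r g) (ah1 m β ρ σ s h) ha1g hb1h
  have h2a := GEN hpos hS j (hamTerm m β ρ σ h) (hamTerm m β ρs σs g) Nh Ng
    (ENNReal.ofReal (1/r)) (ENNReal.ofReal (1/(σs - σ + s))) hTh hTg
    (ah2 m β ρ σ r h) (bg2 m β ρs σ σs s g) ha2h hb2g
  have h2b := GEN hpos hS j (hamTerm m β ρs σs g) (hamTerm m β ρ σ h) Ng Nh
    (ENNReal.ofReal (1/(σs - σ + s))) (ENNReal.ofReal (1/r)) hTg hTh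
    (bg2 m β ρs σ σs s g) (ah2 m β ρ σ r h) ha2g hb2h
  have e1a : (∑' y : ℕ × Pa × Pa,
      GENF m β j (ah1 m β ρ σ s h) (bg1 m β ρ ρs σs r g) y) ≤
      ENNReal.ofReal (1/s) * ENNReal.ofReal (1/(ρs - ρ + r)) * SS * SS * Nh * Ng := by
    simp only [GENF]; exact h1a
  have e1b : (∑' y : ℕ × Pa × Pa,
      GENF m β j (bg1 m β ρ ρs σs r g) (ah1 m β ρ σ s h) y) ≤
      ENNReal.ofReal (1/(ρs - ρ + r)) * ENNReal.ofReal (1/s) * SS * SS * Ng * Nh := by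
    simp only [GENF]; exact h1b
  have e2a : (∑' y : ℕ × Pa × Pa,
      GENF m β j (ah2 m β ρ σ r h) (bg2 m β ρs σ σs s g) y) ≤
      ENNReal.ofReal (1/r) * ENNReal.ofReal (1/(σs - σ + s)) * SS * SS * Nh * Ng := by
    simp only [GENF]; exact h2a
  have e2b : (∑' y : ℕ × Pa × Pa,
      GENF m β j (bg2 m β ρs σ σs s g) (ah2 m β ρ σ r h) y) ≤
      ENNReal.ofReal (1/(σs - σ + s)) * ENNReal.ofReal (1/r) * SS * SS * Ng * Nh := by
    simp only [GENF]; exact h2b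
  -- combine the constants
  have hcρ : ENNReal.ofReal (1/s) * ENNReal.ofReal (1/(ρs - ρ + r)) ≤
      ENNReal.ofReal (max (1 / (r * (σs - σ + s))) (1 / (s * (ρs - ρ + r)))) := by
    rw [ofm (by positivity)]
    apply ENNReal.ofReal_le_ofReal
    rw [show (1/s) * (1/(ρs - ρ + r)) = 1 / (s * (ρs - ρ + r)) by
      rw [div_mul_div_comm, one_mul]]
    exact le_max_right _ _
  have hcσ : ENNReal.ofReal (1/r) * ENNReal.ofReal (1/(σs - σ + s)) ≤
      ENNReal.ofReal (max (1 / (r * (σs - σ + s))) (1 / (s * (ρs - ρ + r)))) := by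
    rw [ofm (by positivity)]
    apply ENNReal.ofReal_le_ofReal
    rw [show (1/r) * (1/(σs - σ + s)) = 1 / (r * (σs - σ + s)) by
      rw [div_mul_div_comm, one_mul]]
    exact le_max_left _ _
  set MX := ENNReal.ofReal (max (1 / (r * (σs - σ + s))) (1 / (s * (ρs - ρ + r)))) with hMX
  have htot : (∑' y : ℕ × Pa × Pa,
      GENF m β j (ah1 m β ρ σ s h) (bg1 m β ρ ρs σs r g) y) +
    (∑' y : ℕ × Pa × Pa, GENF m β j (bg1 m β ρ ρs σs r g) (ah1 m β ρ σ s h) y) +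
    (∑' y : ℕ × Pa × Pa, GENF m β j (ah2 m β ρ σ r h) (bg2 m β ρs σ σs s g) y) +
    (∑' y : ℕ × Pa × Pa, GENF m β j (bg2 m β ρs σ σs s g) (ah2 m β ρ σ r h) y) ≤
      (MX * (SS * SS * (Nh * Ng))) + (MX * (SS * SS * (Nh * Ng))) +
      (MX * (SS * SS * (Nh * Ng))) + (MX * (SS * SS * (Nh * Ng))) := by
    apply add_le_add (add_le_add (add_le_add ?_ ?_) ?_) ?_
    · refine e1a.trans ?_
      calc ENNReal.ofReal (1/s) * ENNReal.ofReal (1/(ρs - ρ + r)) * SS * SS * Nh * Ng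
          = (ENNReal.ofReal (1/s) * ENNReal.ofReal (1/(ρs - ρ + r))) *
            (SS * SS * (Nh * Ng)) := by ring
        _ ≤ MX * (SS * SS * (Nh * Ng)) := mul_le_mul_left hcρ _
    · refine e1b.trans ?_
      calc ENNReal.ofReal (1/(ρs - ρ + r)) * ENNReal.ofReal (1/s) * SS * SS * Ng * Nh
          = (ENNReal.ofReal (1/s) * ENNReal.ofReal (1/(ρs - ρ + r))) *
            (SS * SS * (Nh * Ng)) := by ring
        _ ≤ MX * (SS * SS * (Nh * Ng)) := mul_le_mul_left hcρ _
    · refine e2a.trans ?_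
      calc ENNReal.ofReal (1/r) * ENNReal.ofReal (1/(σs - σ + s)) * SS * SS * Nh * Ng
          = (ENNReal.ofReal (1/r) * ENNReal.ofReal (1/(σs - σ + s))) *
            (SS * SS * (Nh * Ng)) := by ring
        _ ≤ MX * (SS * SS * (Nh * Ng)) := mul_le_mul_left hcσ _
    · refine e2b.trans ?_
      calc ENNReal.ofReal (1/(σs - σ + s)) * ENNReal.ofReal (1/r) * SS * SS * Ng * Nh
          = (ENNReal.ofReal (1/r) * ENNReal.ofReal (1/(σs - σ + s))) *
            (SS * SS * (Nh * Ng)) := by ring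
        _ ≤ MX * (SS * SS * (Nh * Ng)) := mul_le_mul_left hcσ _
  refine htot.trans (le_of_eq ?_)
  have h4 : ENNReal.ofReal (4 * max (1 / (r * (σs - σ + s))) (1 / (s * (ρs - ρ + r)))) =
      4 * MX := by
    rw [hMX, ← ofm (by norm_num : (0:ℝ) ≤ 4)]
    congr 1
    rw [ENNReal.ofReal_ofNat]
  rw [h4]
  ring
end FourSum

end BrE

namespace BrE

section Blocks

variable {m : ℕ → ℝ} {β ρ ρs σ σs r s S : ℝ} {h g : FormalHam}

/-- The global bound constant. -/
def BIG (m : ℕ → ℝ) (β ρ ρs σ σs r s S : ℝ) (h g : FormalHam) : ℝ≥0∞ :=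
  ENNReal.ofReal (4 * max (1 / (r * (σs - σ + s))) (1 / (s * (ρs - ρ + r)))) *
    (ENNReal.ofReal S * ENNReal.ofReal S *
      (hamNorm m β ρ σ h * hamNorm m β ρs σs g))

lemma psia_inj (p : Pa) : Function.Injective (ψa p) := by
  intro x y hxy
  obtain ⟨q₁, l₁, α₁⟩ := x
  obtain ⟨q₂, l₂, α₂⟩ := y
  simp only [ψa, Prod.mk.injEq] at hxy
  obtain ⟨hq, ⟨hl, hα⟩, _⟩ := hxy
  subst hq; subst hl; subst hα
  rfl

lemma psib_inj (p : Pa) : Function.Injective (ψb p) := by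
  intro x y hxy
  obtain ⟨q₁, l₁, α₁⟩ := x
  obtain ⟨q₂, l₂, α₂⟩ := y
  simp only [ψb, Prod.mk.injEq] at hxy
  obtain ⟨hq, _, hl, hα⟩ := hxy
  subst hq; subst hl; subst hα
  rfl

lemma tsum_keyL_le (hpos : ∀ i, 0 < m i) (hle1 : ∀ i, m i ≤ 1) (hanti : Antitone m)
    (hβ0 : 0 < β) (hβ1 : β < 1)
    (hρ : 0 < ρ) (hρρs : ρ ≤ ρs) (hσ : 0 < σ) (hσσs : σ ≤ σs)
    (hr : 0 < r) (hrρ : r < ρ) (hs : 0 < s) (hsσ : s < σ)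
    (hS : ∀ q₀ : ℕ, ∑' n : ℕ, ENNReal.ofReal ((m (q₀ + n) / m q₀) ^ (1 - β)) ≤
      ENNReal.ofReal S)
    (p : Pa) :
    ∑' x : XX, ENNReal.ofReal (mProd m ((hSupp p.1 p.2).erase (jA p)) ^ (-β) *
        (norm : ℂ → ℝ) (bracketTerm m h g p.1 p.2 x) * (ρ - r) ^ a1 p.2 *
        Real.exp ((σ - s) * (l1 p.1 : ℝ))) ≤
    ENNReal.ofReal (m (jA p)) * BIG m β ρ ρs σ σs r s S h g := by
  have hkey := fun x : XX => key (h := h) (g := g) hpos hle1 hanti hβ0 hβ1 hρ hρρs hσ hσσs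
    hr hrρ hs hsσ p x
  calc ∑' x : XX, ENNReal.ofReal (mProd m ((hSupp p.1 p.2).erase (jA p)) ^ (-β) *
        (norm : ℂ → ℝ) (bracketTerm m h g p.1 p.2 x) * (ρ - r) ^ a1 p.2 *
        Real.exp ((σ - s) * (l1 p.1 : ℝ)))
      ≤ ∑' x : XX, ENNReal.ofReal (m (jA p)) *
          (GENF m β (jA p) (ah1 m β ρ σ s h) (bg1 m β ρ ρs σs r g) (ψa p x) +
           GENF m β (jA p) (bg1 m β ρ ρs σs r g) (ah1 m β ρ σ s h) (ψb p x) +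
           GENF m β (jA p) (ah2 m β ρ σ r h) (bg2 m β ρs σ σs s g) (ψa p x) +
           GENF m β (jA p) (bg2 m β ρs σ σs s g) (ah2 m β ρ σ r h) (ψb p x)) :=
        ENNReal.tsum_le_tsum hkey
    _ = ENNReal.ofReal (m (jA p)) *
          ((∑' x : XX, GENF m β (jA p) (ah1 m β ρ σ s h) (bg1 m β ρ ρs σs r g) (ψa p x)) +
           (∑' x : XX, GENF m β (jA p) (bg1 m β ρ ρs σs r g) (ah1 m β ρ σ s h) (ψb p x)) +
           (∑' x : XX, GENF m β (jA p) (ah2 m β ρ σ r h) (bg2 m β ρs σ σs s g) (ψa p x)) +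
           (∑' x : XX, GENF m β (jA p) (bg2 m β ρs σ σs s g) (ah2 m β ρ σ r h) (ψb p x))) := by
        rw [ENNReal.tsum_mul_left]
        congr 1
        rw [ENNReal.tsum_add, ENNReal.tsum_add, ENNReal.tsum_add]
    _ ≤ ENNReal.ofReal (m (jA p)) *
          ((∑' y : ℕ × Pa × Pa, GENF m β (jA p) (ah1 m β ρ σ s h) (bg1 m β ρ ρs σs r g) y) +
           (∑' y : ℕ × Pa × Pa, GENF m β (jA p) (bg1 m β ρ ρs σs r g) (ah1 m β ρ σ s h) y) +
           (∑' y : ℕ × Pa × Pa, GENF m β (jA p) (ah2 m β ρ σ r h) (bg2 m β ρs σ σs s g) y) +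
           (∑' y : ℕ × Pa × Pa, GENF m β (jA p) (bg2 m β ρs σ σs s g) (ah2 m β ρ σ r h) y)) := by
        apply mul_le_mul_right
        apply add_le_add (add_le_add (add_le_add ?_ ?_) ?_) ?_
        · exact ENNReal.tsum_comp_le_tsum_of_injective (psia_inj p) _
        · exact ENNReal.tsum_comp_le_tsum_of_injective (psib_inj p) _
        · exact ENNReal.tsum_comp_le_tsum_of_injective (psia_inj p) _
        · exact ENNReal.tsum_comp_le_tsum_of_injective (psib_inj p) _
    _ ≤ ENNReal.ofReal (m (jA p)) * BIG m β ρ ρs σ σs r s S h g := by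
        apply mul_le_mul_right
        exact four_sum hpos hρ hρρs hσ hσσs hr hrρ hs hsσ hS (jA p)

lemma BIG_ne_top (hNh : hamNorm m β ρ σ h ≠ ⊤) (hNg : hamNorm m β ρs σs g ≠ ⊤) :
    BIG m β ρ ρs σ σs r s S h g ≠ ⊤ := by
  unfold BIG
  apply ENNReal.mul_ne_top ENNReal.ofReal_ne_top
  apply ENNReal.mul_ne_top (ENNReal.mul_ne_top ENNReal.ofReal_ne_top ENNReal.ofReal_ne_top)
  exact ENNReal.mul_ne_top hNh hNg

lemma summable_bt (hpos : ∀ i, 0 < m i) (hle1 : ∀ i, m i ≤ 1) (hanti : Antitone m)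
    (hβ0 : 0 < β) (hβ1 : β < 1)
    (hρ : 0 < ρ) (hρρs : ρ ≤ ρs) (hσ : 0 < σ) (hσσs : σ ≤ σs)
    (hr : 0 < r) (hrρ : r < ρ) (hs : 0 < s) (hsσ : s < σ)
    (hS : ∀ q₀ : ℕ, ∑' n : ℕ, ENNReal.ofReal ((m (q₀ + n) / m q₀) ^ (1 - β)) ≤
      ENNReal.ofReal S)
    (hNh : hamNorm m β ρ σ h ≠ ⊤) (hNg : hamNorm m β ρs σs g ≠ ⊤)
    (l : ℕ →₀ ℤ) (α : ℕ →₀ ℕ) :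
    Summable (bracketTerm m h g l α) := by
  set p : Pa := (l, α) with hp
  have hρr : 0 < ρ - r := by linarith
  have hσs' : 0 < σ - s := by linarith
  set c : ℝ := mProd m ((hSupp p.1 p.2).erase (jA p)) ^ (-β) *
    ((ρ - r) ^ a1 p.2 * Real.exp ((σ - s) * (l1 p.1 : ℝ))) with hc
  have hcpos : 0 < c := by
    rw [hc]
    apply mul_pos (Real.rpow_pos_of_pos (mProd_pos hpos _) _)
    exact mul_pos (pow_pos hρr _) (Real.exp_pos _)
  have heq : ∀ x : XX, ENNReal.ofReal (mProd m ((hSupp p.1 p.2).erase (jA p)) ^ (-β) *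
      (norm : ℂ → ℝ) (bracketTerm m h g p.1 p.2 x) * (ρ - r) ^ a1 p.2 *
      Real.exp ((σ - s) * (l1 p.1 : ℝ))) =
      ENNReal.ofReal c * ENNReal.ofReal ((norm : ℂ → ℝ) (bracketTerm m h g p.1 p.2 x)) := by
    intro x
    rw [ofm hcpos.le]
    congr 1
    rw [hc]
    ring
  have hbound := tsum_keyL_le (h := h) (g := g) hpos hle1 hanti hβ0 hβ1 hρ hρρs hσ hσσs
    hr hrρ hs hsσ hS p
  rw [tsum_congr heq, ENNReal.tsum_mul_left] at hbound
  have hfin : (∑' x : XX, ENNReal.ofReal ((norm : ℂ → ℝ) (bracketTerm m h g p.1 p.2 x))) ≠ ⊤ := by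
    intro htop
    rw [htop] at hbound
    rw [ENNReal.mul_top (by
      simp only [ne_eq, ENNReal.ofReal_eq_zero, not_le]
      exact hcpos)] at hbound
    have : ENNReal.ofReal (m (jA p)) * BIG m β ρ ρs σ σs r s S h g ≠ ⊤ :=
      ENNReal.mul_ne_top ENNReal.ofReal_ne_top (BIG_ne_top hNh hNg)
    exact this (top_le_iff.1 hbound)
  have hnn : ∀ x : XX, ENNReal.ofReal ((norm : ℂ → ℝ) (bracketTerm m h g p.1 p.2 x)) =
      ((‖bracketTerm m h g p.1 p.2 x‖₊ : ℝ≥0) : ℝ≥0∞) := by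
    intro x
    rw [← norm_toNNReal]; rfl
  rw [tsum_congr hnn] at hfin
  have hsum0 : Summable (fun x : XX => ‖bracketTerm m h g p.1 p.2 x‖₊) :=
    ENNReal.tsum_coe_ne_top_iff_summable.1 hfin
  have hsum1 : Summable (fun x : XX => ‖bracketTerm m h g p.1 p.2 x‖) :=
    NNReal.summable_coe.2 hsum0
  exact Summable.of_norm hsum1

end Blocks

end BrE

namespace BrE

section Final

variable {m : ℕ → ℝ} {β ρ ρs σ σs r s S : ℝ} {h g : FormalHam}

lemma hamTerm_bracket_le (hpos : ∀ i, 0 < m i)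
    (hρr : 0 < ρ - r) (hσs : 0 < σ - s) (j : ℕ) (p : Pa) :
    hamTerm m β (ρ - r) (σ - s) (bracket m h g) j p ≤
    ∑' x : XX, (if (hSupp p.1 p.2).max = (j : WithBot ℕ) then
      ENNReal.ofReal (mProd m ((hSupp p.1 p.2).erase (jA p)) ^ (-β) *
        (norm : ℂ → ℝ) (bracketTerm m h g p.1 p.2 x) * (ρ - r) ^ a1 p.2 *
        Real.exp ((σ - s) * (l1 p.1 : ℝ))) else 0) := by
  unfold hamTerm
  by_cases hmax : (hSupp p.1 p.2).max = (j : WithBot ℕ)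
  · rw [if_pos hmax]
    have hj : jA p = j := jOf_eq_of_max hmax
    subst hj
    rw [tsum_congr (fun x : XX => if_pos hmax)]
    have hWnn : (0:ℝ) ≤ mProd m ((hSupp p.1 p.2).erase (jA p)) ^ (-β) :=
      Real.rpow_nonneg (mProd_pos hpos _).le _
    set c : ℝ := mProd m ((hSupp p.1 p.2).erase (jA p)) ^ (-β) *
      ((ρ - r) ^ a1 p.2 * Real.exp ((σ - s) * (l1 p.1 : ℝ))) with hc
    have hcnn : 0 ≤ c := by
      rw [hc]
      exact mul_nonneg hWnn (mul_nonneg (pow_nonneg hρr.le _) (Real.exp_nonneg _))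
    by_cases hsum : Summable (fun x : XX => ‖bracketTerm m h g p.1 p.2 x‖)
    · have hbr : (norm : ℂ → ℝ) (bracket m h g p.1 p.2) ≤
          ∑' x : XX, (norm : ℂ → ℝ) (bracketTerm m h g p.1 p.2 x) := by
        unfold bracket
        rw [norm_mul, Complex.norm_I, one_mul]
        have := norm_tsum_le_tsum_norm hsum
        simpa using this
      calc ENNReal.ofReal (mProd m ((hSupp p.1 p.2).erase (jA p)) ^ (-β) *
            (norm : ℂ → ℝ) (bracket m h g p.1 p.2) * (ρ - r) ^ a1 p.2 *
            Real.exp ((σ - s) * (l1 p.1 : ℝ)))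
          ≤ ENNReal.ofReal (c * ∑' x : XX, (norm : ℂ → ℝ) (bracketTerm m h g p.1 p.2 x)) := by
            apply ENNReal.ofReal_le_ofReal
            have hstep : mProd m ((hSupp p.1 p.2).erase (jA p)) ^ (-β) *
                (norm : ℂ → ℝ) (bracket m h g p.1 p.2) * (ρ - r) ^ a1 p.2 *
                Real.exp ((σ - s) * (l1 p.1 : ℝ)) =
                (mProd m ((hSupp p.1 p.2).erase (jA p)) ^ (-β) *
                ((ρ - r) ^ a1 p.2 * Real.exp ((σ - s) * (l1 p.1 : ℝ)))) *
                (norm : ℂ → ℝ) (bracket m h g p.1 p.2) := by ring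
            rw [hstep, ← hc]
            exact mul_le_mul_of_nonneg_left hbr hcnn
        _ = ENNReal.ofReal c *
            ENNReal.ofReal (∑' x : XX, (norm : ℂ → ℝ) (bracketTerm m h g p.1 p.2 x)) :=
            (ofm hcnn).symm
        _ = ENNReal.ofReal c *
            ∑' x : XX, ENNReal.ofReal ((norm : ℂ → ℝ) (bracketTerm m h g p.1 p.2 x)) := by
            congr 1
            apply ENNReal.ofReal_tsum_of_nonneg (fun x => norm_nonneg _)
            have : (fun x : XX => (norm : ℂ → ℝ) (bracketTerm m h g p.1 p.2 x)) =
                fun x : XX => ‖bracketTerm m h g p.1 p.2 x‖ := by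
              funext x
              rfl
            rw [this]
            exact hsum
        _ = ∑' x : XX, ENNReal.ofReal c *
            ENNReal.ofReal ((norm : ℂ → ℝ) (bracketTerm m h g p.1 p.2 x)) :=
            ENNReal.tsum_mul_left.symm
        _ = ∑' x : XX, ENNReal.ofReal (mProd m ((hSupp p.1 p.2).erase (jA p)) ^ (-β) *
            (norm : ℂ → ℝ) (bracketTerm m h g p.1 p.2 x) * (ρ - r) ^ a1 p.2 *
            Real.exp ((σ - s) * (l1 p.1 : ℝ))) := by
            apply tsum_congr
            intro x
            rw [ofm hcnn]
            congr 1
            rw [hc]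
            ring
    · have hnsum : ¬ Summable (bracketTerm m h g p.1 p.2) := by
        intro hsf
        exact hsum (summable_norm_iff.2 hsf)
      have hzero : bracket m h g p.1 p.2 = 0 := by
        unfold bracket
        rw [tsum_eq_zero_of_not_summable hnsum, mul_zero]
      rw [hzero]
      simp
  · rw [if_neg hmax]
    exact zero_le

lemma block_sum_le (hpos : ∀ i, 0 < m i) (hle1 : ∀ i, m i ≤ 1) (hanti : Antitone m)
    (hβ0 : 0 < β) (hβ1 : β < 1)
    (hρ : 0 < ρ) (hρρs : ρ ≤ ρs) (hσ : 0 < σ) (hσσs : σ ≤ σs)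
    (hr : 0 < r) (hrρ : r < ρ) (hs : 0 < s) (hsσ : s < σ)
    (hS : ∀ q₀ : ℕ, ∑' n : ℕ, ENNReal.ofReal ((m (q₀ + n) / m q₀) ^ (1 - β)) ≤
      ENNReal.ofReal S)
    (j : ℕ) :
    ∑' p : Pa, hamTerm m β (ρ - r) (σ - s) (bracket m h g) j p ≤
      ENNReal.ofReal (m j) * BIG m β ρ ρs σ σs r s S h g := by
  have hρr : 0 < ρ - r := by linarith
  have hσs' : 0 < σ - s := by linarith
  have hptwise : ∀ (p : Pa) (x : XX),
      (if (hSupp p.1 p.2).max = (j : WithBot ℕ) then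
        ENNReal.ofReal (mProd m ((hSupp p.1 p.2).erase (jA p)) ^ (-β) *
          (norm : ℂ → ℝ) (bracketTerm m h g p.1 p.2 x) * (ρ - r) ^ a1 p.2 *
          Real.exp ((σ - s) * (l1 p.1 : ℝ))) else 0) ≤
      ENNReal.ofReal (m j) *
        ((if x.2.2 ≤ p.2 + Finsupp.single x.1 1 then
            GENF m β j (ah1 m β ρ σ s h) (bg1 m β ρ ρs σs r g) (ψa p x) else 0) +
         (if x.2.2 ≤ p.2 + Finsupp.single x.1 1 then
            GENF m β j (bg1 m β ρ ρs σs r g) (ah1 m β ρ σ s h) (ψb p x) else 0) +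
         (if x.2.2 ≤ p.2 + Finsupp.single x.1 1 then
            GENF m β j (ah2 m β ρ σ r h) (bg2 m β ρs σ σs s g) (ψa p x) else 0) +
         (if x.2.2 ≤ p.2 + Finsupp.single x.1 1 then
            GENF m β j (bg2 m β ρs σ σs s g) (ah2 m β ρ σ r h) (ψb p x) else 0)) := by
    intro p x
    by_cases hmax : (hSupp p.1 p.2).max = (j : WithBot ℕ)
    · rw [if_pos hmax]
      have hj : jA p = j := jOf_eq_of_max hmax
      by_cases hgood : x.2.2 ≤ p.2 + Finsupp.single x.1 1
      · rw [if_pos hgood, if_pos hgood, if_pos hgood, if_pos hgood]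
        rw [← hj]
        exact key (h := h) (g := g) hpos hle1 hanti hβ0 hβ1 hρ hρρs hσ hσσs
          hr hrρ hs hsσ p x
      · obtain ⟨q, l', α'⟩ := x
        have hzero : bracketTerm m h g p.1 p.2 (q, l', α') = 0 := by
          simp only [bracketTerm]
          rw [if_neg hgood]
        rw [hzero]
        simp
    · rw [if_neg hmax]
      exact zero_le
  calc ∑' p : Pa, hamTerm m β (ρ - r) (σ - s) (bracket m h g) j p
      ≤ ∑' p : Pa, ∑' x : XX, (if (hSupp p.1 p.2).max = (j : WithBot ℕ) then
          ENNReal.ofReal (mProd m ((hSupp p.1 p.2).erase (jA p)) ^ (-β) *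
            (norm : ℂ → ℝ) (bracketTerm m h g p.1 p.2 x) * (ρ - r) ^ a1 p.2 *
            Real.exp ((σ - s) * (l1 p.1 : ℝ))) else 0) :=
        ENNReal.tsum_le_tsum (fun p => hamTerm_bracket_le hpos hρr hσs' j p)
    _ = ∑' z : Pa × XX, (if (hSupp z.1.1 z.1.2).max = (j : WithBot ℕ) then
          ENNReal.ofReal (mProd m ((hSupp z.1.1 z.1.2).erase (jA z.1)) ^ (-β) *
            (norm : ℂ → ℝ) (bracketTerm m h g z.1.1 z.1.2 z.2) * (ρ - r) ^ a1 z.1.2 *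
            Real.exp ((σ - s) * (l1 z.1.1 : ℝ))) else 0) :=
        (ENNReal.tsum_prod (f := fun (p : Pa) (x : XX) =>
          (if (hSupp p.1 p.2).max = (j : WithBot ℕ) then
          ENNReal.ofReal (mProd m ((hSupp p.1 p.2).erase (jA p)) ^ (-β) *
            (norm : ℂ → ℝ) (bracketTerm m h g p.1 p.2 x) * (ρ - r) ^ a1 p.2 *
            Real.exp ((σ - s) * (l1 p.1 : ℝ))) else 0))).symm
    _ ≤ ∑' z : Pa × XX, ENNReal.ofReal (m j) *
        ((if z.2.2.2 ≤ z.1.2 + Finsupp.single z.2.1 1 then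
            GENF m β j (ah1 m β ρ σ s h) (bg1 m β ρ ρs σs r g) (ψa z.1 z.2) else 0) +
         (if z.2.2.2 ≤ z.1.2 + Finsupp.single z.2.1 1 then
            GENF m β j (bg1 m β ρ ρs σs r g) (ah1 m β ρ σ s h) (ψb z.1 z.2) else 0) +
         (if z.2.2.2 ≤ z.1.2 + Finsupp.single z.2.1 1 then
            GENF m β j (ah2 m β ρ σ r h) (bg2 m β ρs σ σs s g) (ψa z.1 z.2) else 0) +
         (if z.2.2.2 ≤ z.1.2 + Finsupp.single z.2.1 1 then
            GENF m β j (bg2 m β ρs σ σs s g) (ah2 m β ρ σ r h) (ψb z.1 z.2) else 0)) :=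
        ENNReal.tsum_le_tsum (fun z => hptwise z.1 z.2)
    _ = ENNReal.ofReal (m j) *
        ((∑' z : Pa × XX, (if z.2.2.2 ≤ z.1.2 + Finsupp.single z.2.1 1 then
            GENF m β j (ah1 m β ρ σ s h) (bg1 m β ρ ρs σs r g) (ψa z.1 z.2) else 0)) +
         (∑' z : Pa × XX, (if z.2.2.2 ≤ z.1.2 + Finsupp.single z.2.1 1 then
            GENF m β j (bg1 m β ρ ρs σs r g) (ah1 m β ρ σ s h) (ψb z.1 z.2) else 0)) +
         (∑' z : Pa × XX, (if z.2.2.2 ≤ z.1.2 + Finsupp.single z.2.1 1 then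
            GENF m β j (ah2 m β ρ σ r h) (bg2 m β ρs σ σs s g) (ψa z.1 z.2) else 0)) +
         (∑' z : Pa × XX, (if z.2.2.2 ≤ z.1.2 + Finsupp.single z.2.1 1 then
            GENF m β j (bg2 m β ρs σ σs s g) (ah2 m β ρ σ r h) (ψb z.1 z.2) else 0))) := by
        rw [ENNReal.tsum_mul_left]
        congr 1
        rw [ENNReal.tsum_add, ENNReal.tsum_add, ENNReal.tsum_add]
    _ ≤ ENNReal.ofReal (m j) *
        ((∑' y : ℕ × Pa × Pa, GENF m β j (ah1 m β ρ σ s h) (bg1 m β ρ ρs σs r g) y) +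
         (∑' y : ℕ × Pa × Pa, GENF m β j (bg1 m β ρ ρs σs r g) (ah1 m β ρ σ s h) y) +
         (∑' y : ℕ × Pa × Pa, GENF m β j (ah2 m β ρ σ r h) (bg2 m β ρs σ σs s g) y) +
         (∑' y : ℕ × Pa × Pa, GENF m β j (bg2 m β ρs σ σs s g) (ah2 m β ρ σ r h) y)) := by
        apply mul_le_mul_right
        apply add_le_add (add_le_add (add_le_add ?_ ?_) ?_) ?_
        · exact tsum_ifG_le _ ψa psia_inj_good
        · exact tsum_ifG_le _ ψb psib_inj_good
        · exact tsum_ifG_le _ ψa psia_inj_good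
        · exact tsum_ifG_le _ ψb psib_inj_good
    _ ≤ ENNReal.ofReal (m j) * BIG m β ρ ρs σ σs r s S h g := by
        apply mul_le_mul_right
        exact four_sum hpos hρ hρρs hσ hσσs hr hrρ hs hsσ hS j

end Final

end BrE

theorem bracket_estimate (S : ℝ) :
    ∃ c : ℝ, 0 < c ∧
      ∀ (κ M : ℝ), 0 < κ → 1 ≤ M → ∀ m : ℕ → ℝ, IsMassSeq κ M m →
      ∀ β : ℝ, β ∈ Set.Ioo (0 : ℝ) 1 → Sbeta m β ≤ ENNReal.ofReal S →
      ∀ ρ ρs σ σs r s : ℝ,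
        0 < ρ → ρ ≤ ρs → 0 < σ → σ ≤ σs → 0 < r → r < ρ → 0 < s → s < σ →
      ∀ h g : FormalHam,
        hamNorm m β ρ σ h ≠ ⊤ → hamNorm m β ρs σs g ≠ ⊤ →
        (∀ l α, Summable (bracketTerm m h g l α)) ∧
        hamNorm m β (ρ - r) (σ - s) (bracket m h g) ≤
          ENNReal.ofReal (c * max (1 / (r * (σs - σ + s))) (1 / (s * (ρs - ρ + r)))) *
            (hamNorm m β ρ σ h * hamNorm m β ρs σs g) := by
  refine ⟨4 * S ^ 2 + 4, by positivity, ?_⟩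
  intro κ M hκ hM m hm β hβ hSb ρ ρs σ σs r s hρ hρρs hσ hσσs hr hrρ hs hsσ h g hNh hNg
  obtain ⟨hβ0, hβ1⟩ := hβ
  have hpos := hm.pos
  have hle1 := hm.le_one
  have hanti := hm.anti
  have hS : ∀ q₀ : ℕ, ∑' n : ℕ, ENNReal.ofReal ((m (q₀ + n) / m q₀) ^ (1 - β)) ≤
      ENNReal.ofReal S := fun q₀ =>
    le_trans (le_iSup (fun q => ∑' n : ℕ,
      ENNReal.ofReal ((m (q + n) / m q) ^ (1 - β))) q₀) hSb
  constructor
  · intro l α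
    exact BrE.summable_bt hpos hle1 hanti hβ0 hβ1 hρ hρρs hσ hσσs hr hrρ hs hsσ hS
      hNh hNg l α
  · have hσgap : 0 < σs - σ + s := by linarith
    have hρgap : 0 < ρs - ρ + r := by linarith
    have hmain : hamNorm m β (ρ - r) (σ - s) (bracket m h g) ≤
        BrE.BIG m β ρ ρs σ σs r s S h g := by
      unfold hamNorm
      apply iSup_le
      intro j
      have hb := BrE.block_sum_le (h := h) (g := g) hpos hle1 hanti hβ0 hβ1 hρ hρρs hσ
        hσσs hr hrρ hs hsσ hS j
      have hne : ENNReal.ofReal (m j) ≠ 0 := by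
        simp only [ne_eq, ENNReal.ofReal_eq_zero, not_le]
        exact hpos j
      calc (ENNReal.ofReal (m j))⁻¹ *
            ∑' p : (ℕ →₀ ℤ) × (ℕ →₀ ℕ), hamTerm m β (ρ - r) (σ - s) (bracket m h g) j p
          ≤ (ENNReal.ofReal (m j))⁻¹ *
            (ENNReal.ofReal (m j) * BrE.BIG m β ρ ρs σ σs r s S h g) :=
            mul_le_mul_right hb _
        _ = BrE.BIG m β ρ ρs σ σs r s S h g := by
            rw [← mul_assoc, ENNReal.inv_mul_cancel hne ENNReal.ofReal_ne_top, one_mul]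
    refine hmain.trans ?_
    unfold BrE.BIG
    have hmaxnn : 0 ≤ max (1 / (r * (σs - σ + s))) (1 / (s * (ρs - ρ + r))) :=
      le_trans (by positivity) (le_max_left (1 / (r * (σs - σ + s))) _)
    by_cases hS0 : 0 ≤ S
    · calc ENNReal.ofReal (4 * max (1 / (r * (σs - σ + s))) (1 / (s * (ρs - ρ + r)))) *
            (ENNReal.ofReal S * ENNReal.ofReal S *
              (hamNorm m β ρ σ h * hamNorm m β ρs σs g))
          = (ENNReal.ofReal (4 * max (1 / (r * (σs - σ + s))) (1 / (s * (ρs - ρ + r)))) *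
              ENNReal.ofReal S * ENNReal.ofReal S) *
            (hamNorm m β ρ σ h * hamNorm m β ρs σs g) := by ring
        _ ≤ ENNReal.ofReal ((4 * S ^ 2 + 4) *
              max (1 / (r * (σs - σ + s))) (1 / (s * (ρs - ρ + r)))) *
            (hamNorm m β ρ σ h * hamNorm m β ρs σs g) := by
            apply mul_le_mul_left
            rw [BrE.ofm (by positivity), BrE.ofm (by positivity)]
            apply ENNReal.ofReal_le_ofReal
            nlinarith [hmaxnn, sq_nonneg S]
    · have hz : ENNReal.ofReal S = 0 := by
        simp only [ENNReal.ofReal_eq_zero]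
        linarith
      rw [hz]
      simp
end
end
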